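/- arXiv:2404.06655 — 5 statements merged into one kernel-verified Lean document; each statement's English description precedes it below -/
import Mathlib

section
/- Let R be a semilocal Prüfer domain with fraction field K, let K' ⊆ K be a subfield, and let R' denote the intersection R ∩ K' (taken inside K, i.e. the subring of K' consisting of elements lying in the image of R). Then: (1) R' is a Prüfer domain; (2) R' is semilocal; (3) the fraction field of R' is K', i.e. every element of K' can be written as a quotient a/b with a, b ∈ R', b ≠ 0; and (4) every maximal ideal of R' is the contraction of a maximal ideal of R, i.e. the canonical map MaxSpec(R) → MaxSpec(R'), m ↦ m ∩ R', is surjective. -/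
set_option linter.unusedSectionVars false


/-- A valuation ring, per the context: an integral domain in which, for every pair of
elements, one divides the other. -/
def IsValuationDomain (V : Type*) [CommRing V] : Prop :=
  IsDomain V ∧ ∀ a b : V, a ∣ b ∨ b ∣ a

/-- A Prüfer domain, per the context: an integral domain whose localisation at every
prime ideal is a valuation ring. -/
def IsPrueferDomain (R : Type*) [CommRing R] : Prop :=
  IsDomain R ∧ ∀ (p : Ideal R) [p.IsPrime], IsValuationDomain (Localization.AtPrime p)

/-- A semilocal ring: a ring having only finitely many maximal ideals. -/
def IsSemilocalRing (R : Type*) [CommRing R] : Prop :=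
  {m : Ideal R | m.IsMaximal}.Finite

namespace SPIS

variable {R : Type*} [CommRing R] [IsDomain R]

/-- membership in the image of the localization `R_m` inside `K = Frac R`. -/
def memO (m : Ideal R) (x : FractionRing R) : Prop :=
  ∃ r s : R, s ∉ m ∧ x * algebraMap R (FractionRing R) s = algebraMap R (FractionRing R) r

/-- membership in the maximal ideal of the localization `R_m`, inside `K`. -/
def memM (m : Ideal R) (x : FractionRing R) : Prop :=
  ∃ r s : R, s ∉ m ∧ r ∈ m ∧ x * algebraMap R (FractionRing R) s = algebraMap R (FractionRing R) r

variable {m : Ideal R}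

lemma phi_inj : Function.Injective (algebraMap R (FractionRing R)) :=
  IsFractionRing.injective R (FractionRing R)

lemma one_notin [hm : m.IsPrime] : (1:R) ∉ m := m.ne_top_iff_one.mp hm.ne_top

lemma mo_map [m.IsPrime] (r : R) : memO m (algebraMap R (FractionRing R) r) :=
  ⟨r, 1, one_notin, by simp⟩

lemma mo_zero [m.IsPrime] : memO m 0 := by simpa using mo_map (m := m) 0

lemma mo_one [m.IsPrime] : memO m 1 := by simpa using mo_map (m := m) 1

lemma mo_add [m.IsPrime] {x y : FractionRing R} (hx : memO m x) (hy : memO m y) :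
    memO m (x + y) := by
  obtain ⟨r1, s1, hs1, h1⟩ := hx
  obtain ⟨r2, s2, hs2, h2⟩ := hy
  refine ⟨r1 * s2 + r2 * s1, s1 * s2, fun h => ?_, ?_⟩
  · rcases (Ideal.IsPrime.mem_or_mem ‹_› h) with h | h
    exacts [hs1 h, hs2 h]
  · push_cast [map_add, map_mul]
    rw [← h1, ← h2]; ring

lemma mo_mul [m.IsPrime] {x y : FractionRing R} (hx : memO m x) (hy : memO m y) :
    memO m (x * y) := by
  obtain ⟨r1, s1, hs1, h1⟩ := hx
  obtain ⟨r2, s2, hs2, h2⟩ := hy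
  refine ⟨r1 * r2, s1 * s2, fun h => ?_, ?_⟩
  · rcases (Ideal.IsPrime.mem_or_mem ‹_› h) with h | h
    exacts [hs1 h, hs2 h]
  · push_cast [map_mul]
    rw [← h1, ← h2]; ring

lemma mo_neg [m.IsPrime] {x : FractionRing R} (hx : memO m x) : memO m (-x) := by
  obtain ⟨r, s, hs, h⟩ := hx
  exact ⟨-r, s, hs, by rw [map_neg, ← h]; ring⟩

lemma mo_sub [m.IsPrime] {x y : FractionRing R} (hx : memO m x) (hy : memO m y) :
    memO m (x - y) := by
  rw [sub_eq_add_neg]; exact mo_add hx (mo_neg hy)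

lemma mo_pow [m.IsPrime] {x : FractionRing R} (hx : memO m x) (n : ℕ) : memO m (x ^ n) := by
  induction n with
  | zero => simpa using mo_one
  | succ n ih => rw [pow_succ]; exact mo_mul ih hx

lemma mo_sum [m.IsPrime] {ι : Type*} {t : Finset ι} {f : ι → FractionRing R}
    (h : ∀ i ∈ t, memO m (f i)) : memO m (∑ i ∈ t, f i) := by
  classical
  induction t using Finset.induction with
  | empty => simpa using mo_zero
  | insert _ _ hni ih =>
    rw [Finset.sum_insert hni]
    exact mo_add (h _ (Finset.mem_insert_self _ _))
      (ih fun i hi => h i (Finset.mem_insert_of_mem hi))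

lemma mm_mo {x : FractionRing R} (hx : memM m x) : memO m x := by
  obtain ⟨r, s, hs, _, h⟩ := hx; exact ⟨r, s, hs, h⟩

lemma mm_map [m.IsPrime] {r : R} (hr : r ∈ m) :
    memM m (algebraMap R (FractionRing R) r) := ⟨r, 1, one_notin, hr, by simp⟩

lemma mm_zero [m.IsPrime] : memM m 0 := by simpa using mm_map (m := m) m.zero_mem

lemma mm_add [m.IsPrime] {x y : FractionRing R} (hx : memM m x) (hy : memM m y) :
    memM m (x + y) := by
  obtain ⟨r1, s1, hs1, hr1, h1⟩ := hx
  obtain ⟨r2, s2, hs2, hr2, h2⟩ := hy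
  refine ⟨r1 * s2 + r2 * s1, s1 * s2, fun h => ?_, ?_, ?_⟩
  · rcases (Ideal.IsPrime.mem_or_mem ‹_› h) with h | h
    exacts [hs1 h, hs2 h]
  · exact Ideal.add_mem _ (Ideal.mul_mem_right _ _ hr1) (Ideal.mul_mem_right _ _ hr2)
  · push_cast [map_add, map_mul]
    rw [← h1, ← h2]; ring

lemma mm_neg [m.IsPrime] {x : FractionRing R} (hx : memM m x) : memM m (-x) := by
  obtain ⟨r, s, hs, hr, h⟩ := hx
  exact ⟨-r, s, hs, m.neg_mem hr, by rw [map_neg, ← h]; ring⟩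

lemma mm_sub [m.IsPrime] {x y : FractionRing R} (hx : memM m x) (hy : memM m y) :
    memM m (x - y) := by
  rw [sub_eq_add_neg]; exact mm_add hx (mm_neg hy)

lemma mo_mul_mm [m.IsPrime] {x y : FractionRing R} (hx : memO m x) (hy : memM m y) :
    memM m (x * y) := by
  obtain ⟨r1, s1, hs1, h1⟩ := hx
  obtain ⟨r2, s2, hs2, hr2, h2⟩ := hy
  refine ⟨r1 * r2, s1 * s2, fun h => ?_, Ideal.mul_mem_left _ _ hr2, ?_⟩
  · rcases (Ideal.IsPrime.mem_or_mem ‹_› h) with h | h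
    exacts [hs1 h, hs2 h]
  · push_cast [map_mul]
    rw [← h1, ← h2]; ring

lemma mm_pow [m.IsPrime] {x : FractionRing R} (hx : memM m x) {n : ℕ} (hn : 1 ≤ n) :
    memM m (x ^ n) := by
  obtain ⟨k, rfl⟩ := Nat.exists_eq_add_of_le hn
  rw [pow_add, pow_one, mul_comm]
  exact mo_mul_mm (mo_pow (mm_mo hx) k) hx

lemma not_mm_one [m.IsPrime] : ¬ memM m 1 := by
  rintro ⟨r, s, hs, hr, h⟩
  rw [one_mul] at h
  exact hs (phi_inj h ▸ hr)

/-- If `x ∈ O_m` then `x` is in the maximal ideal or a unit. -/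
lemma mo_cases {x : FractionRing R} (hx : memO m x) :
    memM m x ∨ (x ≠ 0 ∧ memO m x⁻¹) := by
  obtain ⟨r, s, hs, h⟩ := hx
  by_cases hr : r ∈ m
  · exact Or.inl ⟨r, s, hs, hr, h⟩
  · right
    have hr0 : r ≠ 0 := fun h0 => hr (h0 ▸ m.zero_mem)
    have hφr : algebraMap R (FractionRing R) r ≠ 0 := fun h0 => hr0 (phi_inj (by simpa using h0))
    have hx0 : x ≠ 0 := by
      rintro rfl
      rw [zero_mul] at h
      exact hφr h.symm
    refine ⟨hx0, s, r, hr, ?_⟩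
    rw [← h]
    field_simp

end SPIS

-- section 2 : appended to s1 for testing
namespace SPIS

set_option linter.unusedSectionVars false

variable {R : Type*} [CommRing R] [IsDomain R] {m : Ideal R}

/-- The valuation hypothesis at a prime `m`. -/
def ValAt (m : Ideal R) [m.IsPrime] : Prop :=
  ∀ a b : Localization.AtPrime m, a ∣ b ∨ b ∣ a

/-- From divisibility in `R_m` : the dichotomy `x ∈ O_m ∨ x⁻¹ ∈ O_m`. -/
lemma mo_or_inv [m.IsPrime] (hv : ValAt m) (x : FractionRing R) :
    memO m x ∨ memO m x⁻¹ := by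
  obtain ⟨r, s, hs, rfl⟩ := IsFractionRing.div_surjective (A := R) x
  set φ := algebraMap R (FractionRing R) with hφ
  have hs0 : (s : R) ≠ 0 := nonZeroDivisors.ne_zero hs
  have hφs : φ s ≠ 0 := fun h => hs0 (phi_inj (h.trans (map_zero φ).symm))
  set ψ := algebraMap R (Localization.AtPrime m) with hψ
  have key : ∀ a b : R, (ψ a ∣ ψ b) → ∃ c d t : R, d ∉ m ∧ t ∉ m ∧ t * d * b = t * c * a := by
    rintro a b ⟨c, hc⟩
    obtain ⟨⟨c1, c2⟩, rfl⟩ := IsLocalization.mk'_surjective m.primeCompl c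
    have h2 : ψ (b * c2) = ψ (a * c1) := by
      simp only [hψ, map_mul] at hc ⊢
      rw [hc, mul_assoc, IsLocalization.mk'_spec]
    obtain ⟨t, ht⟩ := (IsLocalization.eq_iff_exists m.primeCompl _).mp h2
    exact ⟨c1, c2, t, c2.2, t.2, by linear_combination ht⟩
  rcases hv (ψ s) (ψ r) with h | h
  · -- s ∣ r : x = r/s ∈ O_m
    obtain ⟨c, d, t, hd, ht, heq⟩ := key s r h
    left
    refine ⟨t * c, t * d, fun hmem => ?_, ?_⟩
    · rcases Ideal.IsPrime.mem_or_mem ‹_› hmem with h' | h'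
      exacts [ht h', hd h']
    · have h3 := congrArg φ heq
      simp only [map_mul] at h3
      rw [div_mul_eq_mul_div, div_eq_iff hφs]
      simp only [map_mul]
      linear_combination h3
  · -- r ∣ s : x⁻¹ ∈ O_m
    obtain ⟨c, d, t, hd, ht, heq⟩ := key r s h
    right
    by_cases hr0 : r = 0
    · subst hr0
      simp only [map_zero, zero_div, inv_zero]
      exact mo_zero
    have hφr : φ r ≠ 0 := fun h => hr0 (phi_inj (h.trans (map_zero φ).symm))
    refine ⟨t * c, t * d, fun hmem => ?_, ?_⟩
    · rcases Ideal.IsPrime.mem_or_mem ‹_› hmem with h' | h'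
      exacts [ht h', hd h']
    · have h3 := congrArg φ heq
      simp only [map_mul] at h3
      rw [inv_div, div_mul_eq_mul_div, div_eq_iff hφr]
      simp only [map_mul]
      linear_combination h3

/-- full trichotomy -/
lemma mm_or_inv [m.IsPrime] (hv : ValAt m) (x : FractionRing R) :
    memM m x ∨ memO m x⁻¹ := by
  rcases mo_or_inv hv x with h | h
  · rcases mo_cases h with h' | h'
    exacts [Or.inl h', Or.inr h'.2]
  · exact Or.inr h

/-- `x` is a "weak unit" at `m` : both `x` and `x⁻¹` lie in `O_m` and `x ≠ 0`. -/
def wUnit (m : Ideal R) (x : FractionRing R) : Prop :=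
  x ≠ 0 ∧ memO m x ∧ memO m x⁻¹

lemma wUnit_not_mm [m.IsPrime] {x : FractionRing R} (h : wUnit m x) : ¬ memM m x := by
  intro hmm
  have : memM m (x⁻¹ * x) := mo_mul_mm h.2.2 hmm
  rw [inv_mul_cancel₀ h.1] at this
  exact not_mm_one this

lemma wUnit_inv [m.IsPrime] {x : FractionRing R} (h : wUnit m x) : wUnit m x⁻¹ :=
  ⟨inv_ne_zero h.1, h.2.2, by rw [inv_inv]; exact h.2.1⟩

lemma wUnit_mul [m.IsPrime] {x y : FractionRing R} (hx : wUnit m x) (hy : wUnit m y) :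
    wUnit m (x * y) :=
  ⟨mul_ne_zero hx.1 hy.1, mo_mul hx.2.1 hy.2.1, by
    rw [mul_inv]; exact mo_mul hx.2.2 hy.2.2⟩

lemma wUnit_pow [m.IsPrime] {x : FractionRing R} (hx : wUnit m x) (n : ℕ) :
    wUnit m (x ^ n) :=
  ⟨pow_ne_zero n hx.1, mo_pow hx.2.1 n, by rw [← inv_pow]; exact mo_pow hx.2.2 n⟩

/-- an element of `O_m` that is not in `M_m` is a weak unit -/
lemma wUnit_of_not_mm [m.IsPrime] (hv : ValAt m) {x : FractionRing R}
    (ho : memO m x) (hm : ¬ memM m x) : wUnit m x := by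
  have hx0 : x ≠ 0 := fun h => hm (h ▸ mm_zero)
  rcases mm_or_inv hv x with h | h
  · exact absurd h hm
  · exact ⟨hx0, ho, h⟩

/-- `1 + (element of M_m)` is a weak unit. -/
lemma wUnit_one_add [m.IsPrime] (hv : ValAt m) {y : FractionRing R} (hy : memM m y) :
    wUnit m (1 + y) := by
  refine wUnit_of_not_mm hv (mo_add mo_one (mm_mo hy)) fun hmm => ?_
  have : memM m (1 + y - y) := mm_sub hmm hy
  rw [add_sub_cancel_right] at this
  exact not_mm_one this

/-- If `x` is not in `O_m` then `x⁻¹ ∈ M_m`. -/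
lemma mm_inv_of_not_mo [m.IsPrime] (hv : ValAt m) {x : FractionRing R} (h : ¬ memO m x) :
    x ≠ 0 ∧ memM m x⁻¹ := by
  have hx0 : x ≠ 0 := fun h0 => h (h0 ▸ mo_zero)
  rcases mm_or_inv hv x⁻¹ with h' | h'
  · exact ⟨hx0, h'⟩
  · rw [inv_inv] at h'
    exact absurd h' h

/-- Fact A : an element of `K` lying in every `O_m`, `m` maximal, is in the image of `R`. -/
lemma mem_range_of_forall_mo {x : FractionRing R}
    (h : ∀ m : Ideal R, m.IsMaximal → memO m x) : ∃ r : R, algebraMap R (FractionRing R) r = x := by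
  set φ := algebraMap R (FractionRing R)
  set I : Ideal R :=
    { carrier := {s | ∃ r : R, x * φ s = φ r}
      add_mem' := by
        rintro a b ⟨r1, h1⟩ ⟨r2, h2⟩
        exact ⟨r1 + r2, by rw [map_add, map_add, mul_add, h1, h2]⟩
      zero_mem' := ⟨0, by simp⟩
      smul_mem' := by
        rintro c a ⟨r, hr⟩
        exact ⟨c * r, by rw [smul_eq_mul, map_mul, map_mul, ← mul_assoc, mul_comm x (φ c),
          mul_assoc, hr]⟩ } with hI
  have hItop : I = ⊤ := by
    by_contra htop
    obtain ⟨mm, hmm, hle⟩ := Ideal.exists_le_maximal I htop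
    obtain ⟨r, s, hs, heq⟩ := h mm hmm
    exact hs (hle ⟨r, heq⟩)
  have h1 : (1 : R) ∈ I := hItop ▸ Submodule.mem_top
  obtain ⟨r, hr⟩ := h1
  exact ⟨r, by simpa using hr.symm⟩

end SPIS

-- section 3
namespace SPIS

set_option linter.unusedSectionVars false

variable {R : Type*} [CommRing R] [IsDomain R] {m : Ideal R}

lemma mm_pow_sub_one [m.IsPrime] {x : FractionRing R} (ho : memO m x) {d : ℕ}
    (hd : memM m (x ^ d - 1)) (j : ℕ) : memM m (x ^ (d * j) - 1) := by
  have hgeo := geom_sum_mul (x ^ d) j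
  rw [← pow_mul] at hgeo
  rw [← hgeo]
  exact mo_mul_mm (mo_sum fun i _ => mo_pow (mo_pow ho d) i) hd

/-- Key exponent selection: there are arbitrarily large `N` such that
`x^(N+1) - x + 1` is a (weak) unit at every maximal ideal where `x` is a unit. -/
lemma exists_N (hSemi : IsSemilocalRing R) (hv : ∀ (m : Ideal R) (hm : m.IsMaximal), @ValAt R _ m hm.isPrime)
    (x : FractionRing R) (n₀ : ℕ) :
    ∃ N : ℕ, n₀ ≤ N ∧ 1 ≤ N ∧ ∀ m : Ideal R, m.IsMaximal → wUnit m x →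
      wUnit m (x ^ (N + 1) - x + 1) := by
  classical
  set T : Set (Ideal R) := {m | m.IsMaximal ∧ wUnit m x ∧ ∃ d, 1 ≤ d ∧ memM m (x ^ d - 1)}
    with hT
  have hTfin : T.Finite := hSemi.subset (fun m hm => hm.1)
  set f : Ideal R → ℕ := fun m =>
    if h : ∃ d, 1 ≤ d ∧ memM m (x ^ d - 1) then h.choose else 1 with hf
  have hf1 : ∀ m, 1 ≤ f m := by
    intro m
    by_cases h : ∃ d, 1 ≤ d ∧ memM m (x ^ d - 1)
    · simp only [hf, dif_pos h]; exact h.choose_spec.1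
    · simp only [hf, dif_neg h]; exact le_refl 1
  have hfM : ∀ m ∈ T, memM m (x ^ (f m) - 1) := by
    intro m hm
    obtain ⟨-, -, h⟩ := hm
    simp only [hf, dif_pos h]
    exact h.choose_spec.2
  set L : ℕ := ∏ m ∈ hTfin.toFinset, f m with hL
  have hL1 : 1 ≤ L := Finset.one_le_prod' (fun m _ => hf1 m)
  have hdvd : ∀ m ∈ T, f m ∣ L := fun m hm =>
    Finset.dvd_prod_of_mem f (hTfin.mem_toFinset.mpr hm)
  -- for torsion primes, x^(k*L) - 1 is in the maximal ideal
  have hTgood : ∀ m ∈ T, ∀ k : ℕ, memM m (x ^ (k * L) - 1) := by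
    intro m hm k
    haveI := hm.1.isPrime
    obtain ⟨j, hj⟩ := hdvd m hm
    rw [show k * L = f m * (j * k) by rw [hj]; ring]
    exact mm_pow_sub_one hm.2.1.2.1 (hfM m hm) (j * k)
  -- bad set of k's for non-torsion unit primes
  set S0 : Set (Ideal R) := {m | m.IsMaximal ∧ wUnit m x ∧ m ∉ T} with hS0
  have hS0fin : S0.Finite := hSemi.subset (fun m hm => hm.1)
  set Bad : Ideal R → Set ℕ := fun m => {k | memM m (x ^ (k * L + 1) - x + 1)} with hBad
  have hBadsub : ∀ m ∈ S0, (Bad m).Subsingleton := by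
    intro m hm
    have key2 : ∀ k k', k ∈ Bad m → k' ∈ Bad m → k < k' → False := by
      intro k k' hk hk' hlt
      haveI := hm.1.isPrime
      have hx0 : x ≠ 0 := hm.2.1.1
      have hkk : k * L ≤ k' * L := Nat.mul_le_mul_right L (le_of_lt hlt)
      have hexp : k * L + 1 + (k' - k) * L = k' * L + 1 := by
        rw [Nat.sub_mul]; omega
      have hiden : x ^ (k' * L + 1) - x + 1 - (x ^ (k * L + 1) - x + 1)
          = x ^ (k * L + 1) * (x ^ ((k' - k) * L) - 1) := by
        rw [mul_sub, mul_one, ← pow_add, hexp]; ring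
      have hz : memM m (x ^ (k * L + 1) * (x ^ ((k' - k) * L) - 1)) := by
        rw [← hiden]; exact mm_sub hk' hk
      have hwu : wUnit m (x ^ (k * L + 1)) := wUnit_pow hm.2.1 _
      have hz2 : memM m (x ^ ((k' - k) * L) - 1) := by
        have := mo_mul_mm hwu.2.2 hz
        rwa [inv_mul_cancel_left₀ hwu.1] at this
      exact hm.2.2 ⟨hm.1, hm.2.1, (k' - k) * L, Nat.mul_pos (by omega) hL1, hz2⟩
    intro k hk k' hk'
    by_contra hne
    rcases lt_or_gt_of_ne hne with h | h
    exacts [key2 _ _ hk hk' h, key2 _ _ hk' hk h]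
  have hBfin : (⋃ m ∈ S0, Bad m).Finite :=
    Set.Finite.biUnion hS0fin (fun m hm => (hBadsub m hm).finite)
  obtain ⟨k, hk⟩ := ((Set.Ici_infinite (max n₀ 1)).diff hBfin).nonempty
  obtain ⟨hk1, hk2⟩ := hk
  refine ⟨k * L, le_trans (le_trans (le_max_left _ _) hk1) (Nat.le_mul_of_pos_right k hL1), ?_, ?_⟩
  · have h1k : 1 ≤ k := le_trans (le_max_right _ _) hk1
    exact Nat.mul_pos h1k hL1
  intro m hm hwu
  haveI := hm.isPrime
  by_cases hmT : m ∈ T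
  · have h1 : x ^ (k * L + 1) - x + 1 = 1 + (x ^ (k * L + 1) - x) := by ring
    have h2 : x ^ (k * L + 1) - x = x * (x ^ (k * L) - 1) := by
      rw [mul_sub, mul_one, ← pow_succ']
    rw [h1, h2]
    exact wUnit_one_add (hv m hm) (mo_mul_mm hwu.2.1 (hTgood m hmT k))
  · have hmS0 : m ∈ S0 := ⟨hm, hwu, hmT⟩
    have hknb : k ∉ Bad m := fun hb => hk2 (Set.mem_biUnion hmS0 hb)
    exact wUnit_of_not_mm (hv m hm)
      (mo_add (mo_sub (mo_pow hwu.2.1 _) hwu.2.1) mo_one) hknb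

/-- At every maximal ideal, `g = x^(N+1) - x + 1` factors as a weak unit times a power
of `x`, in a way controlled by whether `x ∈ O_m`. -/
lemma g_facts [m.IsPrime] (hv : ValAt m) {x : FractionRing R} (hx : x ≠ 0) {N : ℕ} (hN : 1 ≤ N)
    (hu : wUnit m x → wUnit m (x ^ (N + 1) - x + 1)) :
    ∃ u : FractionRing R, wUnit m u ∧
      ((¬ memO m x ∧ memM m x⁻¹ ∧ x ^ (N + 1) - x + 1 = x ^ (N + 1) * u) ∨
       (memO m x ∧ x ^ (N + 1) - x + 1 = u)) := by
  by_cases ho : memO m x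
  · rcases mo_cases ho with hmm | ⟨_, hinv⟩
    · refine ⟨x ^ (N + 1) - x + 1, ?_, Or.inr ⟨ho, rfl⟩⟩
      have h1 : x ^ (N + 1) - x + 1 = 1 + (x ^ (N + 1) - x) := by ring
      rw [h1]
      exact wUnit_one_add hv (mm_sub (mm_pow hmm (by omega)) hmm)
    · exact ⟨_, hu ⟨hx, ho, hinv⟩, Or.inr ⟨ho, rfl⟩⟩
  · obtain ⟨-, hminv⟩ := mm_inv_of_not_mo hv ho
    refine ⟨1 + ((x⁻¹) ^ (N + 1) - (x⁻¹) ^ N), ?_, Or.inl ⟨ho, hminv, ?_⟩⟩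
    · exact wUnit_one_add hv (mm_sub (mm_pow hminv (by omega)) (mm_pow hminv hN))
    · have h1 : x ^ (N + 1) * x⁻¹ ^ (N + 1) = 1 := by
        rw [← mul_pow, mul_inv_cancel₀ hx, one_pow]
      have h2 : x ^ (N + 1) * x⁻¹ ^ N = x := by
        rw [pow_succ, mul_comm (x ^ N) x, mul_assoc, ← mul_pow, mul_inv_cancel₀ hx, one_pow, mul_one]
      linear_combination -h1 + h2

lemma key_element (hSemi : IsSemilocalRing R) (hv : ∀ (m : Ideal R) (hm : m.IsMaximal), @ValAt R _ m hm.isPrime)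
    {x : FractionRing R} (hx : x ≠ 0) (n₀ : ℕ) :
    ∃ N : ℕ, n₀ ≤ N ∧ 1 ≤ N ∧ ∀ m : Ideal R, m.IsMaximal →
      ∃ u : FractionRing R, wUnit m u ∧
        ((¬ memO m x ∧ memM m x⁻¹ ∧ x ^ (N + 1) - x + 1 = x ^ (N + 1) * u) ∨
         (memO m x ∧ x ^ (N + 1) - x + 1 = u)) := by
  obtain ⟨N, h0, h1, hN⟩ := exists_N hSemi hv x n₀
  exact ⟨N, h0, h1, fun m hm =>
    haveI := hm.isPrime
    g_facts (hv m hm) hx h1 (hN m hm)⟩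

end SPIS

-- section 4
namespace SPIS

set_option linter.unusedSectionVars false

variable {R : Type*} [CommRing R] [IsDomain R]

/-- Construction for the fraction-field statement: `x = a/b` with
`a = x^(N+1)/g`, `b = x^N/g`, `g = x^(N+1) - x + 1`, both in all localizations. -/
lemma frac_element (hSemi : IsSemilocalRing R)
    (hv : ∀ (m : Ideal R) (hm : m.IsMaximal), @ValAt R _ m hm.isPrime)
    {x : FractionRing R} (hx : x ≠ 0) :
    ∃ N : ℕ, (x ^ (N + 1) - x + 1) ≠ 0 ∧
      x ^ N * (x ^ (N + 1) - x + 1)⁻¹ ≠ 0 ∧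
      ∀ m : Ideal R, m.IsMaximal →
        memO m (x ^ N * (x ^ (N + 1) - x + 1)⁻¹) ∧
        memO m (x ^ (N + 1) * (x ^ (N + 1) - x + 1)⁻¹) := by
  obtain ⟨N, -, hN1, hdata⟩ := key_element hSemi hv hx 1
  have hg0 : (x ^ (N + 1) - x + 1) ≠ 0 := by
    obtain ⟨m₀, hm₀⟩ := Ideal.exists_maximal R
    obtain ⟨u, hu, hcase⟩ := hdata m₀ hm₀
    rcases hcase with ⟨-, -, heq⟩ | ⟨-, heq⟩
    · rw [heq]; exact mul_ne_zero (pow_ne_zero _ hx) hu.1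
    · rw [heq]; exact hu.1
  refine ⟨N, hg0, mul_ne_zero (pow_ne_zero _ hx) (inv_ne_zero hg0), fun m hm => ?_⟩
  haveI := hm.isPrime
  obtain ⟨u, hu, hcase⟩ := hdata m hm
  rcases hcase with ⟨hno, hminv, heq⟩ | ⟨ho, heq⟩
  · have h1 : x ^ N * (x ^ (N + 1) - x + 1)⁻¹ = x⁻¹ * u⁻¹ := by
      rw [heq, pow_succ]
      field_simp [hu.1]
    have h2 : x ^ (N + 1) * (x ^ (N + 1) - x + 1)⁻¹ = u⁻¹ := by
      rw [heq, mul_inv, ← mul_assoc]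
      rw [mul_inv_cancel₀ (pow_ne_zero _ hx), one_mul]
    rw [h1, h2]
    exact ⟨mo_mul (mm_mo hminv) hu.2.2, hu.2.2⟩
  · rw [heq]
    exact ⟨mo_mul (mo_pow ho N) hu.2.2, mo_mul (mo_pow ho (N + 1)) hu.2.2⟩

/-- Construction for the localization statement: given `x ∈ O_{m₀}`, an element
`s = g_M/g_N` which is a unit at `m₀`, lies in every localization, and so does `s*x`. -/
lemma loc_element (hSemi : IsSemilocalRing R)
    (hv : ∀ (m : Ideal R) (hm : m.IsMaximal), @ValAt R _ m hm.isPrime)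
    {x : FractionRing R} (hx : x ≠ 0) {m₀ : Ideal R} (hm₀ : m₀.IsMaximal)
    (ho₀ : memO m₀ x) :
    ∃ M N : ℕ, (x ^ (N + 1) - x + 1) ≠ 0 ∧
      wUnit m₀ ((x ^ (M + 1) - x + 1) * (x ^ (N + 1) - x + 1)⁻¹) ∧
      ∀ m : Ideal R, m.IsMaximal →
        memO m ((x ^ (M + 1) - x + 1) * (x ^ (N + 1) - x + 1)⁻¹) ∧
        memO m ((x ^ (M + 1) - x + 1) * (x ^ (N + 1) - x + 1)⁻¹ * x) := by
  obtain ⟨M, -, hM1, hdataM⟩ := key_element hSemi hv hx 1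
  obtain ⟨N, hNM, hN1, hdataN⟩ := key_element hSemi hv hx (M + 1)
  obtain ⟨j, hj⟩ := Nat.exists_eq_add_of_le hNM
  -- N = M + 1 + j
  have main : ∀ m : Ideal R, m.IsMaximal →
      (memO m ((x ^ (M + 1) - x + 1) * (x ^ (N + 1) - x + 1)⁻¹) ∧ memO m ((x ^ (M + 1) - x + 1) * (x ^ (N + 1) - x + 1)⁻¹ * x)) ∧ (memO m x → wUnit m ((x ^ (M + 1) - x + 1) * (x ^ (N + 1) - x + 1)⁻¹)) := by
    intro m hm
    haveI := hm.isPrime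
    obtain ⟨uM, huM, hcaseM⟩ := hdataM m hm
    obtain ⟨uN, huN, hcaseN⟩ := hdataN m hm
    rcases hcaseM with ⟨hno, hminv, heqM⟩ | ⟨ho, heqM⟩
    · rcases hcaseN with ⟨-, -, heqN⟩ | ⟨ho', -⟩
      · -- x not in O_m
        have hpow : x ^ (N + 1) = x ^ (M + 1) * x ^ (j + 1) := by
          rw [← pow_add]
          congr 1
          omega
        have hs1 : (x ^ (M + 1) - x + 1) * (x ^ (N + 1) - x + 1)⁻¹ = (x⁻¹) ^ (j + 1) * (uM * uN⁻¹) := by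
          rw [heqM, heqN, hpow]
          linear_combination (uM * (x ^ (j + 1))⁻¹ * uN⁻¹) * (mul_inv_cancel₀ (pow_ne_zero (M + 1) hx))
        have hs2 : (x ^ (M + 1) - x + 1) * (x ^ (N + 1) - x + 1)⁻¹ * x = (x⁻¹) ^ j * (uM * uN⁻¹) := by
          rw [hs1, pow_succ, mul_assoc, mul_assoc, mul_comm (x⁻¹) _, mul_assoc,
            mul_inv_cancel₀ hx, mul_one]
        constructor
        · constructor
          · rw [hs1]
            exact mo_mul (mo_pow (mm_mo hminv) _) (mo_mul huM.2.1 huN.2.2)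
          · rw [hs2]
            exact mo_mul (mo_pow (mm_mo hminv) _) (mo_mul huM.2.1 huN.2.2)
        · intro hcon
          exact absurd hcon hno
      · exact absurd ho' hno
    · rcases hcaseN with ⟨hno', -, -⟩ | ⟨-, heqN⟩
      · exact absurd ho hno'
      · -- x ∈ O_m : s is a weak unit
        have hwu : wUnit m ((x ^ (M + 1) - x + 1) * (x ^ (N + 1) - x + 1)⁻¹) := by
          rw [heqM, heqN]
          exact wUnit_mul huM (wUnit_inv huN)
        exact ⟨⟨hwu.2.1, mo_mul hwu.2.1 ho⟩, fun _ => hwu⟩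
  have hgN0 : (x ^ (N + 1) - x + 1) ≠ 0 := by
    obtain ⟨uN, huN, hcaseN⟩ := hdataN m₀ hm₀
    rcases hcaseN with ⟨-, -, heqN⟩ | ⟨-, heqN⟩
    · rw [heqN]; exact mul_ne_zero (pow_ne_zero _ hx) huN.1
    · rw [heqN]; exact huN.1
  exact ⟨M, N, hgN0, (main m₀ hm₀).2 ho₀, fun m hm => (main m hm).1⟩

end SPIS

-- section 5 : assembly
namespace SPIS

set_option linter.unusedSectionVars false
set_option maxHeartbeats 1000000

variable {R : Type*} [CommRing R] [IsDomain R]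

theorem main (hPrufer : IsPrueferDomain R) (hSemilocal : IsSemilocalRing R)
    (K' : Subfield (FractionRing R)) :
    IsPrueferDomain (K'.toSubring.comap (algebraMap R (FractionRing R))) ∧
    IsSemilocalRing (K'.toSubring.comap (algebraMap R (FractionRing R))) ∧
    (∀ x : FractionRing R, x ∈ K' →
      ∃ a b : (K'.toSubring.comap (algebraMap R (FractionRing R))), (b : R) ≠ 0 ∧
      x * algebraMap R (FractionRing R) (b : R) = algebraMap R (FractionRing R) (a : R)) ∧
    (∀ m' : Ideal (K'.toSubring.comap (algebraMap R (FractionRing R))), m'.IsMaximal →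
      ∃ m : Ideal R, m.IsMaximal ∧
        Ideal.comap (K'.toSubring.comap (algebraMap R (FractionRing R))).subtype m = m') := by
  classical
  set φ := algebraMap R (FractionRing R) with hφdef
  set R' : Subring R := K'.toSubring.comap φ with hR'def
  have hR' : ∀ r : R, r ∈ R' ↔ φ r ∈ K' := fun r => Iff.rfl
  have hv : ∀ (m : Ideal R) (hm : m.IsMaximal), @ValAt R _ m hm.isPrime := by
    intro m hm
    haveI := hm.isPrime
    exact (hPrufer.2 m).2
  -- units of R lying in R' are units of R'
  have unit_lift : ∀ x : R', IsUnit (x : R) → IsUnit x := by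
    intro x hx
    obtain ⟨y, hy⟩ := isUnit_iff_exists_inv.mp hx
    have hyK : φ y ∈ K' := by
      have h1 : φ (x : R) * φ y = 1 := by rw [← map_mul, hy, map_one]
      have h2 : φ y = (φ (x : R))⁻¹ := eq_inv_of_mul_eq_one_right h1
      rw [h2]
      exact K'.inv_mem (hR' _ |>.mp x.2)
    refine isUnit_iff_exists_inv.mpr ⟨⟨y, (hR' y).mpr hyK⟩, ?_⟩
    exact Subtype.ext hy
  -- prime avoidance: any proper ideal of R' is contained in the contraction of a maximal
  have avoid : ∀ I : Ideal R', I ≠ ⊤ → ∃ m : Ideal R, m.IsMaximal ∧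
      I ≤ Ideal.comap R'.subtype m := by
    intro I hI
    have hsub : (I : Set R') ⊆ ⋃ m ∈ (hSemilocal.toFinset : Finset (Ideal R)),
        (Ideal.comap R'.subtype m : Set R') := by
      intro x hx
      have hnu : ¬ IsUnit (x : R) := by
        intro hu
        exact hI (Ideal.eq_top_of_isUnit_mem I hx (unit_lift x hu))
      obtain ⟨m, hm, hxm⟩ := Ideal.exists_le_maximal _ (Ideal.span_singleton_ne_top hnu)
      have hxmem : (x : R) ∈ m := hxm (Ideal.subset_span rfl)
      exact Set.mem_biUnion (Finset.mem_coe.mpr (hSemilocal.mem_toFinset.mpr hm)) hxmem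
    have := (Ideal.subset_union_prime (⊥ : Ideal R) ⊥
      (fun m hm _ _ => ((hSemilocal.mem_toFinset.mp hm).isPrime.comap R'.subtype))).mp hsub
    obtain ⟨m, hms, hle⟩ := this
    exact ⟨m, hSemilocal.mem_toFinset.mp hms, hle⟩
  -- Part 4
  have part4 : ∀ m' : Ideal R', m'.IsMaximal →
      ∃ m : Ideal R, m.IsMaximal ∧ Ideal.comap R'.subtype m = m' := by
    intro m' hm'
    obtain ⟨m, hm, hle⟩ := avoid m' hm'.ne_top
    exact ⟨m, hm, (hm'.eq_of_le (Ideal.comap_ne_top _ hm.ne_top) hle).symm⟩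
  -- Part 2
  have part2 : IsSemilocalRing R' := by
    refine Set.Finite.subset (hSemilocal.image (fun m => Ideal.comap R'.subtype m)) ?_
    intro m' hm'
    obtain ⟨m, hm, heq⟩ := part4 m' hm'
    exact ⟨m, hm, heq⟩
  -- membership transfer: elements of K' in all localizations give elements of R'
  have toR' : ∀ z : FractionRing R, z ∈ K' → (∀ m : Ideal R, m.IsMaximal → memO m z) →
      ∃ ρ : R', φ (ρ : R) = z := by
    intro z hz hall
    obtain ⟨r, hr⟩ := mem_range_of_forall_mo hall
    exact ⟨⟨r, (hR' r).mpr (by rw [hr]; exact hz)⟩, hr⟩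
  -- Part 3
  have part3 : ∀ x : FractionRing R, x ∈ K' →
      ∃ a b : R', (b : R) ≠ 0 ∧ x * φ (b : R) = φ (a : R) := by
    intro x hx
    by_cases hx0 : x = 0
    · refine ⟨0, 1, ?_, ?_⟩
      · exact one_ne_zero
      · simp [hx0]
    obtain ⟨N, hg0, hb0, hmem⟩ := frac_element hSemilocal hv hx0
    have hgK : (x ^ (N + 1) - x + 1) ∈ K' :=
      K'.add_mem (K'.sub_mem (K'.pow_mem hx _) hx) K'.one_mem
    have hbK : x ^ N * (x ^ (N + 1) - x + 1)⁻¹ ∈ K' :=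
      K'.mul_mem (K'.pow_mem hx _) (K'.inv_mem hgK)
    have haK : x ^ (N + 1) * (x ^ (N + 1) - x + 1)⁻¹ ∈ K' :=
      K'.mul_mem (K'.pow_mem hx _) (K'.inv_mem hgK)
    obtain ⟨b, hb⟩ := toR' _ hbK (fun m hm => (hmem m hm).1)
    obtain ⟨a, ha⟩ := toR' _ haK (fun m hm => (hmem m hm).2)
    refine ⟨a, b, ?_, ?_⟩
    · intro h0
      rw [h0, map_zero] at hb
      exact hb0 hb.symm
    · rw [hb, ha]
      rw [← mul_assoc, ← pow_succ']
  -- Part 1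
  have part1 : IsPrueferDomain R' := by
    refine ⟨inferInstance, ?_⟩
    intro p' hp'
    refine ⟨inferInstance, ?_⟩
    set ψ := algebraMap R' (Localization.AtPrime p') with hψdef
    -- reduction lemmas : mk' is associated to the image of the numerator
    have assoc1 : ∀ (d : R') (s : p'.primeCompl),
        IsLocalization.mk' (Localization.AtPrime p') d s ∣ ψ d := by
      intro d s
      exact Dvd.intro _ (IsLocalization.mk'_spec _ d s)
    have assoc2 : ∀ (d : R') (s : p'.primeCompl),
        ψ d ∣ IsLocalization.mk' (Localization.AtPrime p') d s := by
      intro d s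
      exact Dvd.intro _ (IsLocalization.mk'_eq_mul_mk'_one d s).symm
    -- the core divisibility fact
    have core : ∀ d₁ d₂ : R', (d₁ : R) ≠ 0 → (d₂ : R) ≠ 0 →
        (∃ m₀ : Ideal R, m₀.IsMaximal ∧ p' ≤ Ideal.comap R'.subtype m₀ ∧
          memO m₀ (φ (d₂ : R) / φ (d₁ : R))) → ψ d₁ ∣ ψ d₂ := by
      intro d₁ d₂ hd₁ hd₂ ⟨m₀, hm₀, hpm₀, ho⟩
      have hφd₁ : φ (d₁ : R) ≠ 0 := fun h => hd₁ (phi_inj (h.trans (map_zero φ).symm))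
      have hφd₂ : φ (d₂ : R) ≠ 0 := fun h => hd₂ (phi_inj (h.trans (map_zero φ).symm))
      obtain ⟨x, hxdef⟩ : ∃ x : FractionRing R, x = φ (d₂ : R) / φ (d₁ : R) := ⟨_, rfl⟩
      rw [← hxdef] at ho
      have hx0 : x ≠ 0 := by rw [hxdef]; exact div_ne_zero hφd₂ hφd₁
      have hxK : x ∈ K' := by
        rw [hxdef, div_eq_mul_inv]
        exact K'.mul_mem ((hR' _).mp d₂.2) (K'.inv_mem ((hR' _).mp d₁.2))
      obtain ⟨M, N, hgN0, hwu, hmem⟩ := loc_element hSemilocal hv hx0 hm₀ ho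
      have hgMK : (x ^ (M + 1) - x + 1) ∈ K' :=
        K'.add_mem (K'.sub_mem (K'.pow_mem hxK _) hxK) K'.one_mem
      have hgNK : (x ^ (N + 1) - x + 1) ∈ K' :=
        K'.add_mem (K'.sub_mem (K'.pow_mem hxK _) hxK) K'.one_mem
      have hsK : (x ^ (M + 1) - x + 1) * (x ^ (N + 1) - x + 1)⁻¹ ∈ K' :=
        K'.mul_mem hgMK (K'.inv_mem hgNK)
      obtain ⟨σ, hσ⟩ := toR' _ hsK (fun m hm => (hmem m hm).1)
      obtain ⟨ε, hε⟩ := toR' _ (K'.mul_mem hsK hxK) (fun m hm => (hmem m hm).2)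
      -- σ is not in p'
      have hσnot : σ ∉ p' := by
        intro hσp
        have hσm₀ : (σ : R) ∈ m₀ := hpm₀ hσp
        haveI := hm₀.isPrime
        have : memM m₀ ((x ^ (M + 1) - x + 1) * (x ^ (N + 1) - x + 1)⁻¹) := by
          refine ⟨σ, 1, one_notin, hσm₀, ?_⟩
          rw [map_one, mul_one, hσ]
        exact wUnit_not_mm hwu this
      -- the relation σ * d₂ = ε * d₁
      have hmul : x * φ (d₁ : R) = φ (d₂ : R) := by
        rw [hxdef, div_mul_cancel₀ _ hφd₁]
      have hrel : σ * d₂ = ε * d₁ := by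
        apply Subtype.ext
        apply phi_inj
        push_cast [map_mul]
        rw [hσ, hε]
        linear_combination (-((x ^ (M + 1) - x + 1) * (x ^ (N + 1) - x + 1)⁻¹)) * hmul
      -- conclude divisibility
      have hU : IsUnit (ψ σ) := IsLocalization.map_units (Localization.AtPrime p') (⟨σ, hσnot⟩ : p'.primeCompl)
      rw [← hU.dvd_mul_left]
      refine Dvd.intro (ψ ε) ?_
      rw [← map_mul, ← map_mul, hrel, mul_comm]
    -- main divisibility argument
    intro a b
    obtain ⟨⟨d₁, s₁⟩, rfl⟩ := IsLocalization.mk'_surjective p'.primeCompl a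
    obtain ⟨⟨d₂, s₂⟩, rfl⟩ := IsLocalization.mk'_surjective p'.primeCompl b
    suffices h : ψ d₁ ∣ ψ d₂ ∨ ψ d₂ ∣ ψ d₁ by
      rcases h with h | h
      · exact Or.inl (((assoc1 d₁ s₁).trans h).trans (assoc2 d₂ s₂))
      · exact Or.inr (((assoc1 d₂ s₂).trans h).trans (assoc2 d₁ s₁))
    by_cases hd₂ : (d₂ : R) = 0
    · have : d₂ = 0 := Subtype.ext hd₂
      subst this
      exact Or.inl (by rw [map_zero]; exact dvd_zero _)
    by_cases hd₁ : (d₁ : R) = 0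
    · have : d₁ = 0 := Subtype.ext hd₁
      subst this
      exact Or.inr (by rw [map_zero]; exact dvd_zero _)
    obtain ⟨m₀, hm₀, hpm₀⟩ := avoid p' hp'.ne_top
    haveI := hm₀.isPrime
    rcases mo_or_inv (hv m₀ hm₀) (φ (d₂ : R) / φ (d₁ : R)) with h | h
    · exact Or.inl (core d₁ d₂ hd₁ hd₂ ⟨m₀, hm₀, hpm₀, h⟩)
    · rw [inv_div] at h
      exact Or.inr (core d₂ d₁ hd₂ hd₁ ⟨m₀, hm₀, hpm₀, h⟩)
  exact ⟨part1, part2, part3, part4⟩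

end SPIS


/-- Let `R` be a semilocal Prüfer domain with fraction field `K`, let
`K' ⊆ K` be a subfield and let `R' = R ∩ K'` (realised as the subring of `R` of elements
mapping into `K'`, which is isomorphic to the intersection inside `K` since `R → K` is
injective). Then `R'` is a semilocal Prüfer domain with fraction field `K'`, and every
maximal ideal of `R'` is the contraction of a maximal ideal of `R`. -/
theorem semilocal_prufer_inter_subfield (R : Type*) [CommRing R] [IsDomain R]
    (hPrufer : IsPrueferDomain R) (hSemilocal : IsSemilocalRing R)
    (K' : Subfield (FractionRing R)) :
    letI R' : Subring R := K'.toSubring.comap (algebraMap R (FractionRing R))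
    IsPrueferDomain R' ∧
    IsSemilocalRing R' ∧
    (∀ x : FractionRing R, x ∈ K' → ∃ a b : R', (b : R) ≠ 0 ∧
      x * algebraMap R (FractionRing R) (b : R) = algebraMap R (FractionRing R) (a : R)) ∧
    (∀ m' : Ideal R', m'.IsMaximal →
      ∃ m : Ideal R, m.IsMaximal ∧ Ideal.comap R'.subtype m = m') := by
  exact SPIS.main hPrufer hSemilocal K'
end

section
/- Let R₁ be a semilocal Prüfer domain, let m be a maximal ideal of R₁ with residue field k = R₁/m, and let φ : R₁ → k be the quotient map. Let R₂ ⊆ k be a subring which is a semilocal Prüfer domain whose fraction field is k (i.e. every element of k is a quotient of elements of R₂). Define R := φ⁻¹(R₂) = R₁ ×_k R₂ and let p := ker(R → R₁/m) ∩ R be the contraction of m to R (i.e. p = φ⁻¹(0) viewed in R). Then R is a semilocal Prüfer domain, p is a prime ideal of R, and φ induces a ring isomorphism R/p ≅ R₂ (so the residue field of R at p is k). -/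
lemma IsPrueferDomain.elementwise {A : Type*} [CommRing A] [IsDomain A]
    (h : IsPrueferDomain A) (q : Ideal A) (hq : q.IsPrime) (x y : A) :
    ∃ r s : A, s ∉ q ∧ (y * s = x * r ∨ x * s = y * r) := by
  haveI := hq
  obtain ⟨-, h2⟩ := h
  have h3 := (h2 q).2
  set f := algebraMap A (Localization.AtPrime q) with hfdef
  have key : ∀ x y : A, f x ∣ f y → ∃ r s : A, s ∉ q ∧ y * s = x * r := by
    rintro x y ⟨c, hc⟩
    obtain ⟨⟨r, s⟩, rfl⟩ := IsLocalization.mk'_surjective q.primeCompl c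
    dsimp only at hc
    have h4 : f (y * (s : A)) = f (x * r) := by
      rw [map_mul, map_mul, hc, mul_assoc, IsLocalization.mk'_spec]
    obtain ⟨u, hu⟩ := (IsLocalization.eq_iff_exists q.primeCompl _).mp h4
    refine ⟨(u : A) * r, (u : A) * s, ?_, ?_⟩
    · exact q.primeCompl.mul_mem u.2 s.2
    · linear_combination hu
  rcases h3 (f x) (f y) with hd | hd
  · obtain ⟨r, s, hs, hrs⟩ := key x y hd; exact ⟨r, s, hs, Or.inl hrs⟩
  · obtain ⟨r, s, hs, hrs⟩ := key y x hd; exact ⟨r, s, hs, Or.inr hrs⟩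

lemma isPrueferDomain_of_elementwise {A : Type*} [CommRing A] [IsDomain A]
    (h : ∀ (q : Ideal A), q.IsPrime → ∀ x y : A,
      ∃ r s : A, s ∉ q ∧ (y * s = x * r ∨ x * s = y * r)) :
    IsPrueferDomain A := by
  refine ⟨inferInstance, fun q hq => ⟨?_, ?_⟩⟩
  · exact IsLocalization.isDomain_of_local_atPrime hq
  · haveI := hq
    set f := algebraMap A (Localization.AtPrime q) with hfdef
    have key : ∀ x y : A, (∃ r s : A, s ∉ q ∧ y * s = x * r) → f x ∣ f y := by
      rintro x y ⟨r, s, hs, hrs⟩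
      obtain ⟨v, hv⟩ := IsLocalization.map_units (Localization.AtPrime q)
        (⟨s, hs⟩ : q.primeCompl)
      refine ⟨f r * ↑v⁻¹, ?_⟩
      have h5 : f y * f s = f x * f r := by
        rw [← map_mul, ← map_mul, hrs]
      calc f y = f y * (f s * ↑v⁻¹) := by
            rw [← hv, Units.mul_inv, mul_one]
        _ = f y * f s * ↑v⁻¹ := by ring
        _ = f x * f r * ↑v⁻¹ := by rw [h5]
        _ = f x * (f r * ↑v⁻¹) := by ring
    have d1 : ∀ (x : A) (s : q.primeCompl), IsLocalization.mk' (Localization.AtPrime q) x s ∣ f x :=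
      fun x s => ⟨f s, (IsLocalization.mk'_spec _ _ _).symm⟩
    have d2 : ∀ (x : A) (s : q.primeCompl), f x ∣ IsLocalization.mk' (Localization.AtPrime q) x s :=
      fun x s => ⟨IsLocalization.mk' _ 1 s, IsLocalization.mk'_eq_mul_mk'_one _ _⟩
    intro a b
    obtain ⟨⟨xa, sa⟩, rfl⟩ := IsLocalization.mk'_surjective q.primeCompl a
    obtain ⟨⟨xb, sb⟩, rfl⟩ := IsLocalization.mk'_surjective q.primeCompl b
    dsimp only
    rcases h q hq xa xb with ⟨r, s, hs, h1 | h1⟩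
    · exact Or.inl (((d1 xa sa).trans (key _ _ ⟨r, s, hs, h1⟩)).trans (d2 xb sb))
    · exact Or.inr (((d1 xb sb).trans (key _ _ ⟨r, s, hs, h1⟩)).trans (d2 xa sa))

lemma glue_aux {A : Type*} [CommRing A] (S : Subring A) (q : Ideal S) (hq : q.IsPrime)
    (t : S) (htq : t ∉ q) (htm : ∀ a : A, a * (t : A) ∈ S) :
    ∃ q' : Ideal A, q'.IsPrime ∧ ∀ a : A, (a ∈ q' ↔ ∃ b ∈ q, (b : A) = a * t * t) := by
  refine ⟨{ carrier := {a : A | ∃ b ∈ q, (b : A) = a * t * t}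
            zero_mem' := ⟨0, q.zero_mem, by push_cast; ring⟩
            add_mem' := ?_
            smul_mem' := ?_ }, ⟨?_, ?_⟩, fun a => Iff.rfl⟩
  · rintro a₁ a₂ ⟨b₁, hb₁, e₁⟩ ⟨b₂, hb₂, e₂⟩
    exact ⟨b₁ + b₂, q.add_mem hb₁ hb₂, by push_cast [e₁, e₂]; ring⟩
  · rintro c a ⟨b, hb, e⟩
    have hat : (⟨a * (t : A), htm a⟩ : S) * t ∈ q := by
      have : (⟨a * (t : A), htm a⟩ : S) * t = b := Subtype.ext (by push_cast; rw [e]; try ring)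
      rw [this]; exact hb
    have h1 : (⟨a * (t : A), htm a⟩ : S) ∈ q := (hq.mem_or_mem hat).resolve_right htq
    refine ⟨⟨c * (t : A), htm c⟩ * ⟨a * (t : A), htm a⟩, q.mul_mem_left _ h1, ?_⟩
    push_cast
    show (c * t) * (a * t) = c • a * t * t
    simp only [smul_eq_mul]; ring
  · intro h
    rw [Ideal.eq_top_iff_one] at h
    obtain ⟨b, hb, e⟩ := h
    have : b = t * t := Subtype.ext (by push_cast; rw [e]; try ring)
    rw [this] at hb
    exact htq ((hq.mem_or_mem hb).elim id id)
  · rintro a₁ a₂ ⟨b, hb, e⟩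
    have : (⟨a₁ * (t : A), htm a₁⟩ : S) * ⟨a₂ * (t : A), htm a₂⟩ = b :=
      Subtype.ext (by push_cast; rw [e]; try ring)
    rcases hq.mem_or_mem (this ▸ hb) with h1 | h1
    · exact Or.inl ⟨(⟨a₁ * (t : A), htm a₁⟩ : S) * t, q.mul_mem_right _ h1, by push_cast; ring⟩
    · exact Or.inr ⟨(⟨a₂ * (t : A), htm a₂⟩ : S) * t, q.mul_mem_right _ h1, by push_cast; ring⟩

set_option maxHeartbeats 1000000 in
/-- Gluing a semilocal Prüfer domain `R₁` along the residue field
`k = R₁/m` at a maximal ideal `m` with a semilocal Prüfer domain `R₂ ⊆ k` whose fraction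
field is `k`: the fibre product `R = R₁ ×ₖ R₂ = φ⁻¹(R₂)` is a semilocal Prüfer domain,
the contraction `p` of `m` to `R` is prime, and `φ` induces an isomorphism `R/p ≅ R₂`. -/
theorem glue_semilocal_prufer (R₁ : Type*) [CommRing R₁] [IsDomain R₁]
    (hPrufer₁ : IsPrueferDomain R₁) (hSemilocal₁ : IsSemilocalRing R₁)
    (m : Ideal R₁) (hm : m.IsMaximal)
    (R₂ : Subring (R₁ ⧸ m))
    (hPrufer₂ : IsPrueferDomain R₂) (hSemilocal₂ : IsSemilocalRing R₂)
    (hFrac₂ : ∀ x : R₁ ⧸ m, ∃ a b : R₂, (b : R₁ ⧸ m) ≠ 0 ∧ x * (b : R₁ ⧸ m) = (a : R₁ ⧸ m)) :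
    letI R : Subring R₁ := R₂.comap (Ideal.Quotient.mk m)
    letI p : Ideal R := Ideal.comap R.subtype m
    IsPrueferDomain R ∧ IsSemilocalRing R ∧ p.IsPrime ∧
      ∃ e : (R ⧸ p) ≃+* R₂,
        ∀ x : R, (e (Ideal.Quotient.mk p x) : R₁ ⧸ m) = Ideal.Quotient.mk m (x : R₁) := by
  set R : Subring R₁ := R₂.comap (Ideal.Quotient.mk m) with hRdef
  set p : Ideal R := Ideal.comap R.subtype m with hpdef
  haveI := hm
  haveI : IsDomain R₂ := hPrufer₂.1
  -- basic membership facts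
  have hmR : ∀ z : R₁, z ∈ m → z ∈ R := by
    intro z hz
    have h0 : Ideal.Quotient.mk m z = 0 := Ideal.Quotient.eq_zero_iff_mem.mpr hz
    exact Subring.mem_comap.mpr (by rw [h0]; exact R₂.zero_mem)
  have hmemp : ∀ z : R, z ∈ p ↔ (z : R₁) ∈ m := fun z => Iff.rfl
  -- the homomorphism f : R →+* R₂
  set f : R →+* R₂ :=
    RingHom.codRestrict ((Ideal.Quotient.mk m).comp R.subtype) R₂ (fun x => x.2) with hfdef
  have hfval : ∀ z : R, ((f z : R₂) : R₁ ⧸ m) = Ideal.Quotient.mk m (z : R₁) := fun z => rfl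
  have hf : Function.Surjective f := by
    intro y
    obtain ⟨z, hz⟩ := Ideal.Quotient.mk_surjective (y : R₁ ⧸ m)
    have hzR : z ∈ R := Subring.mem_comap.mpr (by rw [hz]; exact y.2)
    exact ⟨⟨z, hzR⟩, Subtype.ext (by rw [hfval]; exact hz)⟩
  have hker : RingHom.ker f = p := by
    ext z
    rw [RingHom.mem_ker]
    constructor
    · intro h0
      have h1 : Ideal.Quotient.mk m (z : R₁) = 0 := by
        rw [← hfval z, h0]; rfl
      exact (hmemp z).mpr (Ideal.Quotient.eq_zero_iff_mem.mp h1)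
    · intro hz
      exact Subtype.ext (by
        rw [hfval z]
        simpa using Ideal.Quotient.eq_zero_iff_mem.mpr ((hmemp z).mp hz))
  -- inverses modulo m
  have hB : ∀ s₁ : R₁, s₁ ∉ m → ∃ u : R₁, Ideal.Quotient.mk m (s₁ * u) = 1 := by
    intro s₁ hs₁
    obtain ⟨u, i, him, hui⟩ := hm.exists_inv hs₁
    refine ⟨u, ?_⟩
    have h1 : Ideal.Quotient.mk m (u * s₁ + i) = 1 := by rw [hui, map_one]
    rwa [map_add, Ideal.Quotient.eq_zero_iff_mem.mpr him, add_zero, mul_comm] at h1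
  have hnotq : ∀ (q : Ideal R), q.IsPrime → p ≤ q → ∀ z : R₁,
      Ideal.Quotient.mk m z = 1 → ∀ hzR : z ∈ R, (⟨z, hzR⟩ : R) ∉ q := by
    intro q hq hpq z hz1 hzR hzq
    have h1 : (⟨z, hzR⟩ : R) - 1 ∈ p := by
      refine (hmemp _).mpr ?_
      have h2 : Ideal.Quotient.mk m (z - 1) = 0 := by rw [map_sub, hz1, map_one, sub_self]
      have h3 : (((⟨z, hzR⟩ : R) - 1 : R) : R₁) = z - 1 := by push_cast; ring
      rw [h3]
      exact Ideal.Quotient.eq_zero_iff_mem.mp h2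
    have h4 : (1 : R) ∈ q := by
      simpa using q.sub_mem hzq (hpq h1)
    exact hq.ne_top ((Ideal.eq_top_iff_one q).mpr h4)
  -- the key valuation-transfer lemma for primes containing p
  have L' : ∀ (q : Ideal R), q.IsPrime → p ≤ q → ∀ (x y : R) (r₁ s₁ : R₁), s₁ ∉ m →
      (y : R₁) * s₁ = (x : R₁) * r₁ → ∀ ρ σ : R₂, σ ∉ Ideal.map f q →
      Ideal.Quotient.mk m r₁ * (σ : R₁ ⧸ m) = (ρ : R₁ ⧸ m) * Ideal.Quotient.mk m s₁ →
      ∃ r s : R, s ∉ q ∧ y * s = x * r := by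
    intro q hq hpq x y r₁ s₁ hs₁ heq ρ σ hσ hres
    obtain ⟨u, hu1⟩ := hB s₁ hs₁
    have hsuR : s₁ * u ∈ R := Subring.mem_comap.mpr (by rw [hu1]; exact R₂.one_mem)
    have hsuq : (⟨s₁ * u, hsuR⟩ : R) ∉ q := hnotq q hq hpq _ hu1 hsuR
    obtain ⟨β, hβ⟩ := hf σ
    obtain ⟨α, hα⟩ := hf ρ
    have hβq : β ∉ q := fun hβq => hσ (hβ ▸ Ideal.mem_map_of_mem f hβq)
    have hβv : Ideal.Quotient.mk m (β : R₁) = (σ : R₁ ⧸ m) := by rw [← hfval β, hβ]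
    have hαv : Ideal.Quotient.mk m (α : R₁) = (ρ : R₁ ⧸ m) := by rw [← hfval α, hα]
    have hwm : r₁ * (β : R₁) - (α : R₁) * s₁ ∈ m := by
      apply Ideal.Quotient.eq_zero_iff_mem.mp
      rw [map_sub, map_mul, map_mul, hβv, hαv, hres, sub_self]
    have hwuR : (r₁ * (β : R₁) - (α : R₁) * s₁) * u ∈ R := hmR _ (m.mul_mem_right u hwm)
    have hwuq : (⟨(r₁ * (β : R₁) - (α : R₁) * s₁) * u, hwuR⟩ : R) ∈ q :=
      hpq ((hmemp _).mpr (m.mul_mem_right u hwm))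
    refine ⟨α * ⟨s₁ * u, hsuR⟩ + ⟨(r₁ * (β : R₁) - (α : R₁) * s₁) * u, hwuR⟩,
      ⟨s₁ * u, hsuR⟩ * β, ?_, ?_⟩
    · intro hsq
      rcases hq.mem_or_mem hsq with h | h
      exacts [hsuq h, hβq h]
    · apply Subtype.ext
      push_cast
      linear_combination (u * (β : R₁)) * heq
  -- the elementwise Prüfer criterion for R
  have hcrit : ∀ (q : Ideal R), q.IsPrime → ∀ x y : R,
      ∃ r s : R, s ∉ q ∧ (y * s = x * r ∨ x * s = y * r) := by
    intro q hq x y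
    by_cases hpq : p ≤ q
    · haveI hq2 : (Ideal.map f q).IsPrime :=
        Ideal.map_isPrime_of_surjective hf (by rw [hker]; exact hpq)
      have H : ∀ x y : R, ∀ r₁ s₁ : R₁, s₁ ∉ m → (y : R₁) * s₁ = (x : R₁) * r₁ →
          ∃ r s : R, s ∉ q ∧ (y * s = x * r ∨ x * s = y * r) := by
        intro x y r₁ s₁ hs₁ heq
        by_cases hr₁ : r₁ ∈ m
        · refine (L' q hq hpq x y r₁ s₁ hs₁ heq 0 1 ?_ ?_).imp
            (fun r h => h.imp (fun s h => ⟨h.1, Or.inl h.2⟩))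
          · intro h1
            exact hq2.ne_top ((Ideal.eq_top_iff_one _).mpr h1)
          · rw [Ideal.Quotient.eq_zero_iff_mem.mpr hr₁]
            push_cast
            ring
        · obtain ⟨a, b, hb0, hab⟩ := hFrac₂ (Ideal.Quotient.mk m r₁)
          obtain ⟨c, d, hd0, hcd⟩ := hFrac₂ (Ideal.Quotient.mk m s₁)
          obtain ⟨ρ, σ, hσ, hP⟩ := hPrufer₂.elementwise (Ideal.map f q) hq2 (b * c) (a * d)
          have hbd : (b : R₁ ⧸ m) * d ≠ 0 := mul_ne_zero hb0 hd0
          rcases hP with hP | hP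
          · refine (L' q hq hpq x y r₁ s₁ hs₁ heq ρ σ hσ ?_).imp
              (fun r h => h.imp (fun s h => ⟨h.1, Or.inl h.2⟩))
            have hP' : ((a : R₁ ⧸ m) * d) * σ = ((b : R₁ ⧸ m) * c) * ρ := by
              exact_mod_cast congrArg (fun z : R₂ => (z : R₁ ⧸ m)) hP
            apply mul_right_cancel₀ hbd
            linear_combination ((d : R₁ ⧸ m) * (σ : R₁ ⧸ m)) * hab
              - ((ρ : R₁ ⧸ m) * (b : R₁ ⧸ m)) * hcd + hP'
          · refine (L' q hq hpq y x s₁ r₁ hr₁ heq.symm ρ σ hσ ?_).imp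
              (fun r h => h.imp (fun s h => ⟨h.1, Or.inr h.2⟩))
            have hP' : ((b : R₁ ⧸ m) * c) * σ = ((a : R₁ ⧸ m) * d) * ρ := by
              exact_mod_cast congrArg (fun z : R₂ => (z : R₁ ⧸ m)) hP
            apply mul_right_cancel₀ hbd
            linear_combination ((b : R₁ ⧸ m) * (σ : R₁ ⧸ m)) * hcd
              - ((ρ : R₁ ⧸ m) * (d : R₁ ⧸ m)) * hab + hP'
      rcases hPrufer₁.elementwise m hm.isPrime (x : R₁) (y : R₁) with ⟨r₁, s₁, hs₁, h1 | h1⟩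
      · exact H x y r₁ s₁ hs₁ h1
      · obtain ⟨r, s, hs, hrs⟩ := H y x r₁ s₁ hs₁ h1
        exact ⟨r, s, hs, hrs.symm⟩
    · obtain ⟨t, htp, htq⟩ := SetLike.not_le_iff_exists.mp hpq
      have htm' : (t : R₁) ∈ m := (hmemp t).mp htp
      have htm : ∀ a : R₁, a * (t : R₁) ∈ R := fun a => hmR _ (m.mul_mem_left a htm')
      obtain ⟨q', hq', hchar⟩ := glue_aux R q hq t htq htm
      obtain ⟨r, s, hs, hcase⟩ := hPrufer₁.elementwise q' hq' (x : R₁) (y : R₁)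
      have hmem : ∀ a : R₁, a * (t : R₁) * (t : R₁) ∈ R :=
        fun a => hmR _ (m.mul_mem_left _ htm')
      refine ⟨⟨r * t * t, hmem r⟩, ⟨s * t * t, hmem s⟩, ?_, ?_⟩
      · intro hsq
        exact hs ((hchar s).mpr ⟨⟨s * t * t, hmem s⟩, hsq, rfl⟩)
      · rcases hcase with h1 | h1
        · left; apply Subtype.ext; push_cast
          linear_combination ((t : R₁) * (t : R₁)) * h1
        · right; apply Subtype.ext; push_cast
          linear_combination ((t : R₁) * (t : R₁)) * h1
  refine ⟨isPrueferDomain_of_elementwise hcrit, ?_, ?_, ?_⟩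
  · -- semilocal
    have hsub : {q : Ideal R | q.IsMaximal} ⊆
        ((Ideal.comap R.subtype) '' {n : Ideal R₁ | n.IsMaximal}) ∪
        ((Ideal.comap f) '' {n : Ideal R₂ | n.IsMaximal}) := by
      intro q hqmax
      by_cases hpq : p ≤ q
      · right
        have hcm : Ideal.comap f (Ideal.map f q) = q := by
          rw [Ideal.comap_map_of_surjective f hf]
          have : Ideal.comap f ⊥ = p := by
            rw [← hker]; rfl
          rw [this, sup_eq_left.mpr hpq]
        refine ⟨Ideal.map f q, ?_, hcm⟩
        constructor
        constructor
        · intro htop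
          apply hqmax.ne_top
          rw [← hcm, htop, Ideal.comap_top]
        · intro J hJ
          by_cases hJt : Ideal.comap f J = ⊤
          · rw [← Ideal.map_comap_of_surjective f hf J, hJt, Ideal.map_top]
          · exfalso
            have hle : q ≤ Ideal.comap f J := by
              rw [← hcm]; exact Ideal.comap_mono hJ.le
            have : Ideal.comap f J = q := (hqmax.eq_of_le hJt hle).symm
            have hJq : J = Ideal.map f q := by
              rw [← Ideal.map_comap_of_surjective f hf J, this]
            exact hJ.ne hJq.symm
      · left
        obtain ⟨t, htp, htq⟩ := SetLike.not_le_iff_exists.mp hpq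
        haveI hqp : q.IsPrime := hqmax.isPrime
        have htm' : (t : R₁) ∈ m := (hmemp t).mp htp
        have htm : ∀ a : R₁, a * (t : R₁) ∈ R := fun a => hmR _ (m.mul_mem_left a htm')
        obtain ⟨q', hq', hchar⟩ := glue_aux R q hqp t htq htm
        obtain ⟨n, hn, hq'n⟩ := q'.exists_le_maximal hq'.ne_top
        refine ⟨n, hn, ?_⟩
        have hle : q ≤ Ideal.comap R.subtype n := by
          intro a ha
          refine hq'n ((hchar (a : R₁)).mpr ⟨a * t * t, q.mul_mem_right _ (q.mul_mem_right _ ha), ?_⟩)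
          push_cast; ring
        have hne : Ideal.comap R.subtype n ≠ ⊤ := by
          intro h
          apply hn.ne_top
          rw [Ideal.eq_top_iff_one] at h ⊢
          exact h
        exact (hqmax.eq_of_le hne hle).symm
    exact Set.Finite.subset ((hSemilocal₁.image _).union (hSemilocal₂.image _)) hsub
  · rw [← hker]
    exact RingHom.ker_isPrime f
  · -- the isomorphism
    have hfp : ∀ a : R, a ∈ p → f a = 0 := fun a ha => by
      rw [← RingHom.mem_ker, hker]; exact ha
    set g := Ideal.Quotient.lift p f hfp with hgdef
    have hg : ∀ x : R, g (Ideal.Quotient.mk p x) = f x := fun x => Ideal.Quotient.lift_mk p f hfp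
    have hginj : Function.Injective g := by
      intro a b hab
      obtain ⟨xa, rfl⟩ := Ideal.Quotient.mk_surjective a
      obtain ⟨xb, rfl⟩ := Ideal.Quotient.mk_surjective b
      rw [hg, hg] at hab
      have h1 : xa - xb ∈ p := by
        rw [← hker, RingHom.mem_ker, map_sub, hab, sub_self]
      exact Ideal.Quotient.eq.mpr h1
    have hgsur : Function.Surjective g := by
      intro y
      obtain ⟨x, hx⟩ := hf y
      exact ⟨Ideal.Quotient.mk p x, by rw [hg, hx]⟩
    refine ⟨RingEquiv.ofBijective g ⟨hginj, hgsur⟩, fun x => ?_⟩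
    show ((g (Ideal.Quotient.mk p x) : R₂) : R₁ ⧸ m) = _
    rw [hg, hfval]
end

section
/- Let V be a valuation ring with maximal ideal m and fraction field F, let n ≥ 1, let A := V[x₁,…,xₙ] be the polynomial ring, and let p ⊂ A be the prime ideal consisting of all polynomials whose coefficients all lie in m (equivalently, p = mA). Then: (1) the localisation A_p is a valuation ring; (2) the structure homomorphism V → A_p is injective and faithfully flat; and (3) the induced morphism of value groups Frac(V)ˣ/Vˣ → Frac(A)ˣ/(A_p)ˣ is an isomorphism, i.e. for every nonzero t in the fraction field of A there exists a nonzero u in F such that t/u is a unit of A_p, and a nonzero u ∈ F is a unit of A_p only if u is a unit of V. -/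
set_option maxHeartbeats 1000000
set_option synthInstance.maxHeartbeats 1000000

section AuxLemmas

variable {V : Type*} [CommRing V] [IsDomain V] [ValuationRing V] {n : ℕ}

/-- In a valuation ring, every nonempty finite set has an element dividing all others. -/
lemma myExistsDvdAll (s : Finset V) (hs : s.Nonempty) : ∃ a ∈ s, ∀ b ∈ s, a ∣ b := by
  classical
  induction s using Finset.induction_on with
  | empty => simp at hs
  | @insert x s hx ih =>
    rcases s.eq_empty_or_nonempty with rfl | hne
    · exact ⟨x, by simp⟩
    · obtain ⟨a, ha, hall⟩ := ih hne
      rcases ValuationRing.dvd_total a x with h | h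
      · refine ⟨a, Finset.mem_insert_of_mem ha, ?_⟩
        intro b hb
        rcases Finset.mem_insert.1 hb with rfl | hb
        exacts [h, hall b hb]
      · refine ⟨x, Finset.mem_insert_self _ _, ?_⟩
        intro b hb
        rcases Finset.mem_insert.1 hb with rfl | hb
        exacts [dvd_rfl, h.trans (hall b hb)]

/-- Content decomposition: any nonzero polynomial over a valuation ring is a constant
times a polynomial not all of whose coefficients lie in the maximal ideal. -/
lemma myContentDecomp (f : MvPolynomial (Fin n) V) (hf : f ≠ 0) :
    ∃ (v : V) (b : MvPolynomial (Fin n) V), v ≠ 0 ∧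
      b ∉ (IsLocalRing.maximalIdeal V).map MvPolynomial.C ∧ f = MvPolynomial.C v * b := by
  classical
  have hsupp : f.support.Nonempty := MvPolynomial.support_nonempty.mpr hf
  obtain ⟨a, ha, hall⟩ := myExistsDvdAll (f.support.image f.coeff) (hsupp.image _)
  obtain ⟨m₀, hm₀, rfl⟩ := Finset.mem_image.1 ha
  have ha0 : f.coeff m₀ ≠ 0 := MvPolynomial.mem_support_iff.1 hm₀
  have hdvd : MvPolynomial.C (f.coeff m₀) ∣ f := by
    rw [MvPolynomial.C_dvd_iff_dvd_coeff]
    intro i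
    by_cases hi : i ∈ f.support
    · exact hall _ (Finset.mem_image_of_mem _ hi)
    · rw [MvPolynomial.notMem_support_iff.1 hi]; exact dvd_zero _
  obtain ⟨b, hb⟩ := hdvd
  refine ⟨f.coeff m₀, b, ha0, ?_, hb⟩
  intro hmem
  have h1 : b.coeff m₀ ∈ IsLocalRing.maximalIdeal V := MvPolynomial.mem_map_C_iff.1 hmem m₀
  have h2 : f.coeff m₀ = f.coeff m₀ * b.coeff m₀ := by
    conv_lhs => rw [hb]
    rw [MvPolynomial.coeff_C_mul]
  have hb1 : b.coeff m₀ = 1 := mul_left_cancel₀ ha0 (h2.symm.trans (mul_one _).symm)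
  rw [hb1] at h1
  exact (IsLocalRing.maximalIdeal.isMaximal V).ne_top (Ideal.eq_top_of_isUnit_mem _ h1 isUnit_one)

/-- The key step for statement (6). -/
lemma myKey6 {v w : V} {b c : MvPolynomial (Fin n) V} (hv : v ≠ 0) (hdvd : v ∣ w)
    (hb : b ∉ (IsLocalRing.maximalIdeal V).map MvPolynomial.C)
    (h : MvPolynomial.C v * b = MvPolynomial.C w * c) : w ∣ v := by
  obtain ⟨u, rfl⟩ := hdvd
  have hCv : (MvPolynomial.C v : MvPolynomial (Fin n) V) ≠ 0 := by simpa using hv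
  have hb' : b = MvPolynomial.C u * c := by
    apply mul_left_cancel₀ hCv
    rw [h, map_mul]; ring
  obtain ⟨i, hi⟩ : ∃ i, b.coeff i ∉ IsLocalRing.maximalIdeal V := by
    by_contra hcon
    push_neg at hcon
    exact hb (MvPolynomial.mem_map_C_iff.2 hcon)
  have hcoeff : b.coeff i = u * c.coeff i := by rw [hb', MvPolynomial.coeff_C_mul]
  have hu : IsUnit u := by
    by_contra hu
    exact hi (hcoeff ▸ Ideal.mul_mem_right _ _ ((IsLocalRing.mem_maximalIdeal u).2 hu))
  exact hu.mul_right_dvd.2 dvd_rfl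

/-- The ideal of polynomials all of whose coefficients lie in the maximal ideal is prime. -/
lemma myPrime (n : ℕ) :
    (((IsLocalRing.maximalIdeal V).map
      (MvPolynomial.C : V →+* MvPolynomial (Fin n) V))).IsPrime := by
  have e := MvPolynomial.quotientEquivQuotientMvPolynomial (σ := Fin n) (IsLocalRing.maximalIdeal V)
  haveI : (IsLocalRing.maximalIdeal V).IsPrime := (IsLocalRing.maximalIdeal.isMaximal V).isPrime
  haveI hd : IsDomain (MvPolynomial (Fin n) (V ⧸ IsLocalRing.maximalIdeal V)) := inferInstance
  haveI : IsDomain (MvPolynomial (Fin n) V ⧸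
      (IsLocalRing.maximalIdeal V).map (MvPolynomial.C : V →+* MvPolynomial (Fin n) V)) :=
    e.symm.toMulEquiv.isDomain (MvPolynomial (Fin n) (V ⧸ IsLocalRing.maximalIdeal V))
  exact (Ideal.Quotient.isDomain_iff_prime _).mp inferInstance

end AuxLemmas

/-- Let `V` be a valuation ring with maximal ideal `m` and fraction
field `F`, let `n ≥ 1`, `A = V[x₁,…,xₙ]` and `p = mA` (the prime of polynomials all of
whose coefficients lie in `m`).  Then `A_p` is a valuation ring, `V → A_p` is injective
and faithfully flat, and the induced map of value groups
`Frac(V)ˣ/Vˣ → Frac(A)ˣ/(A_p)ˣ` is an isomorphism: every nonzero `t = f/g` in `Frac A`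
differs from some nonzero `u = v/w` in `F` by a unit of `A_p`, and a nonzero `u = v/w`
in `F` is a unit of `A_p` only if it is a unit of `V`. -/
theorem polynomial_generic_point_valuation_ring
    (V : Type*) [CommRing V] [IsDomain V] [ValuationRing V]
    (n : ℕ) (hn : 1 ≤ n) :
    letI A := MvPolynomial (Fin n) V
    letI p : Ideal A := (IsLocalRing.maximalIdeal V).map MvPolynomial.C
    ∃ hp : p.IsPrime,
      (letI := hp
       IsValuationDomain (Localization.AtPrime p) ∧
       Function.Injective
         ((algebraMap A (Localization.AtPrime p)).comp (algebraMap V A)) ∧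
       (letI : Algebra V (Localization.AtPrime p) :=
          ((algebraMap A (Localization.AtPrime p)).comp (algebraMap V A)).toAlgebra
        Module.FaithfullyFlat V (Localization.AtPrime p))) ∧
      (∀ f g : A, f ≠ 0 → g ≠ 0 →
        ∃ (v w : V) (b c : A), v ≠ 0 ∧ w ≠ 0 ∧ b ∉ p ∧ c ∉ p ∧
          f * MvPolynomial.C w * b = g * MvPolynomial.C v * c) ∧
      (∀ v w : V, v ≠ 0 → w ≠ 0 →
        (∃ b c : A, b ∉ p ∧ c ∉ p ∧ MvPolynomial.C v * b = MvPolynomial.C w * c) →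
        (v ∣ w ∧ w ∣ v)) := by
  classical
  set A := MvPolynomial (Fin n) V with hAdef
  set p : Ideal A := (IsLocalRing.maximalIdeal V).map MvPolynomial.C with hpdef
  have hp : p.IsPrime := myPrime n
  haveI : p.IsPrime := hp
  set L := Localization.AtPrime p with hLdef
  -- injectivity of A → L
  have hALinj : Function.Injective (algebraMap A L) :=
    IsLocalization.injective L p.primeCompl_le_nonZeroDivisors
  -- units of L coming from the complement of p
  have hunit : ∀ b : A, b ∉ p → IsUnit (algebraMap A L b) := fun b hb =>
    IsLocalization.map_units L (⟨b, hb⟩ : p.primeCompl)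
  -- key divisibility fact in L
  have key : ∀ f g : A, f ≠ 0 → g ≠ 0 →
      (algebraMap A L f ∣ algebraMap A L g ∨ algebraMap A L g ∣ algebraMap A L f) := by
    intro f g hf hg
    obtain ⟨vf, bf, hvf, hbf, rfl⟩ := myContentDecomp f hf
    obtain ⟨vg, bg, hvg, hbg, rfl⟩ := myContentDecomp g hg
    have ubf := hunit bf hbf
    have ubg := hunit bg hbg
    rcases ValuationRing.dvd_total vf vg with h | h
    · left
      rw [map_mul, ubf.mul_right_dvd, map_mul]
      exact Dvd.dvd.mul_right (map_dvd _ (map_dvd MvPolynomial.C h)) _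
    · right
      rw [map_mul, ubg.mul_right_dvd, map_mul]
      exact Dvd.dvd.mul_right (map_dvd _ (map_dvd MvPolynomial.C h)) _
  refine ⟨hp, ⟨?_, ?_, ?_⟩, ?_, ?_⟩
  · -- L is a valuation domain
    refine ⟨inferInstance, ?_⟩
    intro a b
    obtain ⟨⟨f, s⟩, rfl⟩ := IsLocalization.mk'_surjective p.primeCompl a
    obtain ⟨⟨g, t⟩, rfl⟩ := IsLocalization.mk'_surjective p.primeCompl b
    have hs : IsUnit (algebraMap A L (s : A)) := hunit _ s.2
    have ht : IsUnit (algebraMap A L (t : A)) := hunit _ t.2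
    have ha : IsLocalization.mk' L f s * algebraMap A L (s : A) = algebraMap A L f :=
      IsLocalization.mk'_spec L f s
    have hb : IsLocalization.mk' L g t * algebraMap A L (t : A) = algebraMap A L g :=
      IsLocalization.mk'_spec L g t
    by_cases hf : f = 0
    · right
      have : IsLocalization.mk' L f s = 0 := by rw [hf, IsLocalization.mk'_zero]
      change _ ∣ IsLocalization.mk' L f s; rw [this]; exact dvd_zero _
    by_cases hg : g = 0
    · left
      have : IsLocalization.mk' L g t = 0 := by rw [hg, IsLocalization.mk'_zero]
      change _ ∣ IsLocalization.mk' L g t; rw [this]; exact dvd_zero _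
    rcases key f g hf hg with h | h
    · left
      have h1 : IsLocalization.mk' L f s ∣ algebraMap A L f := ⟨_, ha.symm⟩
      have h2 : algebraMap A L g = IsLocalization.mk' L g t * algebraMap A L (t : A) := hb.symm
      have := h1.trans h
      rw [h2] at this
      exact (ht.dvd_mul_right).1 this
    · right
      have h1 : IsLocalization.mk' L g t ∣ algebraMap A L g := ⟨_, hb.symm⟩
      have h2 : algebraMap A L f = IsLocalization.mk' L f s * algebraMap A L (s : A) := ha.symm
      have := h1.trans h
      rw [h2] at this
      exact (hs.dvd_mul_right).1 this
  · -- injectivity of V → L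
    rw [RingHom.coe_comp]
    exact hALinj.comp (by
      have : (algebraMap V A) = (MvPolynomial.C : V →+* A) := rfl
      rw [this]
      exact MvPolynomial.C_injective _ _)
  · -- faithful flatness
    letI algVL : Algebra V L := ((algebraMap A L).comp (algebraMap V A)).toAlgebra
    refine { toFlat := ?_, submodule_ne_top := ?_ }
    · exact Module.Flat.trans V A L
    · intro m hm htop
      have hm' : m = IsLocalRing.maximalIdeal V := IsLocalRing.eq_maximalIdeal hm
      subst hm'
      have h1 : (1 : L) ∈ (IsLocalRing.maximalIdeal V) • (⊤ : Submodule V L) :=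
        htop.symm ▸ (Submodule.mem_top : (1 : L) ∈ ⊤)
      have h2 : (1 : L) ∈ IsLocalRing.maximalIdeal L := by
        refine Submodule.smul_induction_on h1 ?_ ?_
        · intro r hr x _
          have hx : r • x = algebraMap A L (MvPolynomial.C r) * x := by
            rw [← algebraMap_smul A r x, Algebra.smul_def]
            rfl
          rw [hx]
          refine Ideal.mul_mem_right _ _ ?_
          have hx1 : (MvPolynomial.C r : A) ∈ p := Ideal.mem_map_of_mem _ hr
          have hx2 : algebraMap A L (MvPolynomial.C r) ∈ p.map (algebraMap A L) :=
            Ideal.mem_map_of_mem _ hx1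
          rwa [Localization.AtPrime.map_eq_maximalIdeal] at hx2
        · intro x y hx hy
          exact Ideal.add_mem _ hx hy
      exact (IsLocalRing.maximalIdeal.isMaximal L).ne_top
        (Ideal.eq_top_of_isUnit_mem _ h2 isUnit_one)
  · -- statement (5)
    intro f g hf hg
    obtain ⟨vf, bf, hvf, hbf, hfe⟩ := myContentDecomp f hf
    obtain ⟨vg, bg, hvg, hbg, hge⟩ := myContentDecomp g hg
    refine ⟨vf, vg, bg, bf, hvf, hvg, hbg, hbf, ?_⟩
    rw [hfe, hge]; ring
  · -- statement (6)
    rintro v w hv hw ⟨b, c, hb, hc, h⟩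
    rcases ValuationRing.dvd_total v w with hd | hd
    · exact ⟨hd, myKey6 hv hd hb h⟩
    · exact ⟨myKey6 hw hd hc h.symm, hd⟩
end

section
/- Let V be a valuation ring with maximal ideal m, let n ≥ 1, let A := V[x₁,…,xₙ], and let f ∈ A be a polynomial at least one of whose coefficients does not lie in m (i.e. f ∉ mA). Then the quotient A/(f) is a flat V-module (equivalently, A/(f) is torsion-free over V): whenever v ∈ V and a, b ∈ A satisfy v·a = b·f with v ≠ 0, one has a ∈ fA. -/
open MvPolynomial TensorProduct

private lemma exists_dvd_of_finset {V : Type*} [CommRing V] [IsDomain V] [ValuationRing V]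
    {s : Finset V} (hs : s.Nonempty) : ∃ a ∈ s, ∀ b ∈ s, a ∣ b := by
  classical
  induction s using Finset.induction_on with
  | empty => exact absurd hs (by simp)
  | @insert a s _ ih =>
    rcases s.eq_empty_or_nonempty with rfl | hs'
    · exact ⟨a, by simp⟩
    · obtain ⟨c, hc, hd⟩ := ih hs'
      rcases ValuationRing.dvd_total a c with h | h
      · refine ⟨a, Finset.mem_insert_self _ _, fun b hb => ?_⟩
        rcases Finset.mem_insert.mp hb with rfl | hb
        · exact dvd_rfl
        · exact h.trans (hd b hb)
      · refine ⟨c, Finset.mem_insert_of_mem hc, fun b hb => ?_⟩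
        rcases Finset.mem_insert.mp hb with rfl | hb
        · exact h
        · exact hd b hb

private lemma key_torsion {V : Type*} [CommRing V] [IsDomain V] [ValuationRing V]
    {n : ℕ} {f : MvPolynomial (Fin n) V}
    (hf : f ∉ (IsLocalRing.maximalIdeal V).map
      (MvPolynomial.C : V →+* MvPolynomial (Fin n) V)) :
    ∀ (v : V) (a b : MvPolynomial (Fin n) V), v ≠ 0 →
      MvPolynomial.C v * a = b * f → a ∈ Ideal.span {f} := by
  classical
  intro v a b hv hab
  have hCv : (C v : MvPolynomial (Fin n) V) ≠ 0 := by
    simpa using hv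
  by_cases hb : b = 0
  · subst hb
    rw [zero_mul] at hab
    rcases mul_eq_zero.mp hab with h | h
    · exact absurd h hCv
    · simp [h]
  -- choose a coefficient of b dividing all coefficients of b
  have hsupp : (b.support.image fun d => coeff d b).Nonempty := by
    simp [Finset.image_nonempty, MvPolynomial.support_nonempty, hb]
  obtain ⟨b₀, hb₀mem, hb₀dvd⟩ := exists_dvd_of_finset hsupp
  obtain ⟨d₀, hd₀, hd₀eq⟩ := Finset.mem_image.mp hb₀mem
  have hb₀ne : b₀ ≠ 0 := by
    rw [← hd₀eq]
    exact MvPolynomial.mem_support_iff.mp hd₀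
  -- b = C b₀ * b'
  have hdvd : (C b₀ : MvPolynomial (Fin n) V) ∣ b := by
    conv_rhs => rw [MvPolynomial.as_sum b]
    refine Finset.dvd_sum fun d hd => ?_
    obtain ⟨w, hw⟩ := hb₀dvd _ (Finset.mem_image_of_mem _ hd)
    exact ⟨monomial d w, by rw [hw, C_mul_monomial]⟩
  obtain ⟨b', hb'⟩ := hdvd
  -- coeff of b' at d₀ is 1
  have hcoeffb' : coeff d₀ b' = 1 := by
    have h1 : coeff d₀ b = b₀ * coeff d₀ b' := by rw [hb', coeff_C_mul]
    rw [hd₀eq] at h1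
    exact (mul_left_cancel₀ hb₀ne ((mul_one b₀).trans h1)).symm
  -- b' and f are both nonzero mod m; their product has a unit coefficient
  set m := IsLocalRing.maximalIdeal V
  have hker : ∀ p : MvPolynomial (Fin n) V,
      p ∈ m.map (C : V →+* MvPolynomial (Fin n) V) ↔
        MvPolynomial.map (IsLocalRing.residue V) p = 0 := by
    intro p
    rw [← RingHom.mem_ker, MvPolynomial.ker_map, IsLocalRing.ker_residue]
  have hb'f : b' * f ∉ m.map (C : V →+* MvPolynomial (Fin n) V) := by
    rw [hker, map_mul]
    intro h
    rcases mul_eq_zero.mp h with h | h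
    · have : b' ∈ m.map (C : V →+* MvPolynomial (Fin n) V) := (hker b').mpr h
      have := MvPolynomial.mem_map_C_iff.mp this d₀
      rw [hcoeffb'] at this
      exact (IsLocalRing.maximalIdeal.isMaximal V).ne_top (Ideal.eq_top_of_isUnit_mem _ this isUnit_one)
    · exact hf ((hker f).mpr h)
  obtain ⟨d₁, hd₁⟩ : ∃ d₁, coeff d₁ (b' * f) ∉ m := by
    by_contra h
    push_neg at h
    exact hb'f (MvPolynomial.mem_map_C_iff.mpr h)
  have hc : IsUnit (coeff d₁ (b' * f)) := by
    by_contra h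
    exact hd₁ h
  -- compare coefficients at d₁ in  C v * a = C b₀ * (b' * f)
  have heq : v * coeff d₁ a = b₀ * coeff d₁ (b' * f) := by
    have : C v * a = C b₀ * (b' * f) := by rw [hab, hb']; ring
    have := congrArg (coeff d₁) this
    simpa [coeff_C_mul] using this
  have hvb₀ : v ∣ b₀ := by
    have : v ∣ b₀ * coeff d₁ (b' * f) := ⟨coeff d₁ a, heq.symm⟩
    exact (hc.dvd_mul_right).mp this
  obtain ⟨w, hw⟩ := hvb₀
  have : C v * a = C v * (C w * b' * f) := by
    rw [hab, hb', hw]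
    push_cast [map_mul]
    ring
  have ha : a = C w * b' * f := mul_left_cancel₀ hCv this
  exact Ideal.mem_span_singleton.mpr ⟨C w * b', by rw [ha]; ring⟩


private lemma flat_of_smul_injective {V M : Type*} [CommRing V] [IsDomain V] [ValuationRing V]
    [AddCommGroup M] [Module V M]
    (h : ∀ v : V, v ≠ 0 → Function.Injective fun m : M => v • m) :
    Module.Flat V M := by
  rw [Module.Flat.iff_rTensor_injective]
  intro I hI
  obtain ⟨v, hv⟩ := (IsBezout.isPrincipal_of_FG I hI)
  subst hv
  by_cases hv0 : v = 0
  · subst hv0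
    rw [Submodule.span_zero_singleton]
    have : Subsingleton ((⊥ : Ideal V) ⊗[V] M) := by infer_instance
    exact fun x y _ => Subsingleton.elim x y
  · set e := LinearEquiv.toSpanNonzeroSingleton V V v hv0 with he
    have hcomp : (LinearMap.rTensor M (Submodule.span V {v}).subtype) ∘ₗ
        (LinearEquiv.rTensor M e).toLinearMap
        = LinearMap.rTensor M (LinearMap.toSpanSingleton V V v) := by
      rw [LinearEquiv.coe_rTensor, ← LinearMap.rTensor_comp]
      congr 1
    have hsm : Function.Injective (LinearMap.rTensor M (LinearMap.toSpanSingleton V V v)) := by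
      have hfun : ∀ x : V ⊗[V] M,
          (TensorProduct.lid V M) (LinearMap.rTensor M (LinearMap.toSpanSingleton V V v) x)
            = v • (TensorProduct.lid V M x) := by
        intro x
        induction x using TensorProduct.induction_on with
        | zero => simp
        | tmul r m => simp [LinearMap.toSpanSingleton_apply, smul_smul, mul_comm]
        | add x y hx hy => simp [map_add, hx, hy, smul_add]
      intro x y hxy
      apply (TensorProduct.lid V M).injective
      apply h v hv0
      simp only []
      rw [← hfun, ← hfun, hxy]
    have hinj : Function.Injective ((LinearMap.rTensor M (Submodule.span V {v}).subtype) ∘ₗ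
        (LinearEquiv.rTensor M e).toLinearMap) := by
      rw [hcomp]; exact hsm
    intro x y hxy
    obtain ⟨x', rfl⟩ := (LinearEquiv.rTensor M e).surjective x
    obtain ⟨y', rfl⟩ := (LinearEquiv.rTensor M e).surjective y
    have : x' = y' := hinj (by
      simp only [LinearMap.coe_comp, LinearEquiv.coe_coe, Function.comp_apply]
      exact hxy)
    rw [this]

/-- Let `V` be a valuation ring with maximal ideal `m`, `n ≥ 1`,
`A = V[x₁,…,xₙ]` and `f ∈ A` a polynomial not all of whose coefficients lie in `m`
(i.e. `f ∉ mA`).  Then `A/(f)` is a flat `V`-module; equivalently it is torsion-free: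
whenever `v·a = b·f` with `v ∈ V` nonzero, `a` lies in the ideal `(f)`. -/
theorem quotient_by_nonspecial_polynomial_flat
    (V : Type*) [CommRing V] [IsDomain V] [ValuationRing V]
    (n : ℕ) (hn : 1 ≤ n)
    (f : MvPolynomial (Fin n) V)
    (hf : f ∉ (IsLocalRing.maximalIdeal V).map
      (MvPolynomial.C : V →+* MvPolynomial (Fin n) V)) :
    Module.Flat V (MvPolynomial (Fin n) V ⧸ Ideal.span {f}) ∧
      ∀ (v : V) (a b : MvPolynomial (Fin n) V), v ≠ 0 →
        MvPolynomial.C v * a = b * f → a ∈ Ideal.span {f} := by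
  refine ⟨?_, key_torsion hf⟩
  apply flat_of_smul_injective
  intro v hv
  have hzero : ∀ x : MvPolynomial (Fin n) V ⧸ Ideal.span {f}, v • x = 0 → x = 0 := by
    intro x hx
    obtain ⟨a, rfl⟩ := Ideal.Quotient.mk_surjective x
    have hsm : v • (Ideal.Quotient.mk (Ideal.span {f})) a
        = (Ideal.Quotient.mk (Ideal.span {f})) (C v * a) := by
      refine (Algebra.smul_def v ((Ideal.Quotient.mk (Ideal.span {f})) a)).trans ?_
      rw [map_mul]
      rfl
    rw [hsm, Ideal.Quotient.eq_zero_iff_mem, Ideal.mem_span_singleton] at hx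
    obtain ⟨c, hc⟩ := hx
    have ha : a ∈ Ideal.span {f} := key_torsion hf v a c hv (by rw [hc]; ring)
    rwa [Ideal.Quotient.eq_zero_iff_mem]
  intro x y hxy
  have hsub : v • (x - y) = 0 := by
    simp only at hxy
    rw [smul_sub, hxy, sub_self]
  exact sub_eq_zero.mp (hzero _ hsub)
end

section
/- Let A be a commutative ring whose total ring of fractions K (the localisation of A at the multiplicative set of nonzerodivisors) is a finite product of fields (equivalently, K is a semisimple ring). Let 0 → M → M' → M'' be an exact sequence of finitely presented A-modules (i.e. the map M → M' is injective and its image equals the kernel of M' → M''). If M' and M'' are reflexive A-modules, then M is a reflexive A-module. -/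
open Module

/-- Key lemma: any functional on `M` extends to `M'` after multiplying by a
nonzerodivisor. -/
lemma key_extend (A : Type*) [CommRing A]
    (hK : IsSemisimpleRing (FractionRing A))
    (M M' : Type*) [AddCommGroup M] [Module A M] [AddCommGroup M'] [Module A M']
    (f : M →ₗ[A] M') (hf : Function.Injective f)
    (hM' : Module.FinitePresentation A M')
    (φ : M →ₗ[A] A) :
    ∃ (ψ : M' →ₗ[A] A) (s : nonZeroDivisors A), ψ ∘ₗ f = (s : A) • φ := by
  haveI := hM'
  set S := nonZeroDivisors A
  let K := FractionRing A
  haveI : IsSemisimpleRing K := hK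
  -- localized maps
  let fK : LocalizedModule S M →ₗ[Localization S] LocalizedModule S M' :=
    LocalizedModule.map S f
  have hfK : Function.Injective fK := LocalizedModule.map_injective S f hf
  let φK : LocalizedModule S M →ₗ[K] K :=
    IsLocalizedModule.mapExtendScalars S (LocalizedModule.mkLinearMap S M)
      (Algebra.linearMap A K) K φ
  have hφK : ∀ x : M, φK (LocalizedModule.mkLinearMap S M x) = algebraMap A K (φ x) := by
    intro x
    have := LinearMap.congr_fun
      (IsLocalizedModule.map_comp S (LocalizedModule.mkLinearMap S M)
        (Algebra.linearMap A K) φ) x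
    simpa [φK] using this
  -- extend φK along fK using semisimplicity
  obtain ⟨q, hq⟩ := exists_isCompl (LinearMap.range fK)
  let π := (LinearMap.range fK).linearProjOfIsCompl q hq
  let e : LocalizedModule S M ≃ₗ[K] LinearMap.range fK := LinearEquiv.ofInjective fK hfK
  let ψK : LocalizedModule S M' →ₗ[K] K := φK ∘ₗ (e.symm : _ →ₗ[K] _) ∘ₗ π
  have hψK : ∀ x, ψK (fK x) = φK x := by
    intro x
    have h1 : π (fK x) = ⟨fK x, LinearMap.mem_range_self fK x⟩ :=
      Submodule.linearProjOfIsCompl_apply_left hq ⟨fK x, LinearMap.mem_range_self fK x⟩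
    have h2 : e.symm ⟨fK x, LinearMap.mem_range_self fK x⟩ = x := by
      apply e.injective
      rw [e.apply_symm_apply]
      rfl
    simp [ψK, h1, h2]
  -- descend using finite presentation of M'
  obtain ⟨ψ, s, hψ⟩ := Module.FinitePresentation.exists_lift_of_isLocalizedModule S
    (Algebra.linearMap A K)
    ((ψK.restrictScalars A) ∘ₗ LocalizedModule.mkLinearMap S M')
  refine ⟨ψ, s, ?_⟩
  ext m
  apply IsFractionRing.injective A K
  have h1 := LinearMap.congr_fun hψ (f m)
  simp only [LinearMap.coe_comp, Function.comp_apply, Algebra.linearMap_apply,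
    LinearMap.smul_apply, LinearMap.coe_restrictScalars] at h1 ⊢
  rw [h1]
  have h2 : LocalizedModule.mkLinearMap S M' (f m) = fK (LocalizedModule.mkLinearMap S M m) := by
    simp [fK, LocalizedModule.mkLinearMap_apply]
  rw [Submonoid.smul_def, h2, hψK, hφK]
  exact ((Algebra.linearMap A K).map_smul (s : A) (φ m)).symm


/-- Let `A` be a commutative ring whose total ring of fractions (the
localisation at the nonzerodivisors) is a finite product of fields, equivalently a
semisimple ring.  Given an exact sequence `0 → M → M' → M''` of finitely presented
`A`-modules with `M'` and `M''` reflexive, the module `M` is reflexive. -/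
theorem reflexive_of_exact_of_reflexive
    (A : Type*) [CommRing A]
    (hK : IsSemisimpleRing (FractionRing A))
    (M M' M'' : Type*) [AddCommGroup M] [Module A M]
    [AddCommGroup M'] [Module A M'] [AddCommGroup M''] [Module A M'']
    (f : M →ₗ[A] M') (g : M' →ₗ[A] M'')
    (hf : Function.Injective f) (hfg : LinearMap.range f = LinearMap.ker g)
    (hM : Module.FinitePresentation A M) (hM' : Module.FinitePresentation A M')
    (hM'' : Module.FinitePresentation A M'')
    (hrefl' : Module.IsReflexive A M') (hrefl'' : Module.IsReflexive A M'') :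
    Module.IsReflexive A M := by
  have hgf : g ∘ₗ f = 0 := by
    ext m
    have : f m ∈ LinearMap.ker g := hfg ▸ LinearMap.mem_range_self f m
    simpa using this
  -- naturality of evaluation
  have nat : ∀ m : M, f.dualMap.dualMap (Dual.eval A M m) = Dual.eval A M' (f m) :=
    fun m => LinearMap.ext fun _ => rfl
  have nat' : ∀ m' : M', g.dualMap.dualMap (Dual.eval A M' m') = Dual.eval A M'' (g m') :=
    fun m' => LinearMap.ext fun _ => rfl
  -- injectivity of the double dual of f
  have hinj2 : Function.Injective f.dualMap.dualMap := by
    rw [injective_iff_map_eq_zero]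
    intro η hη
    ext φ
    obtain ⟨ψ, s, hs⟩ := key_extend A hK M M' f hf hM' φ
    have h1 : η (f.dualMap ψ) = 0 := by
      have := LinearMap.congr_fun hη ψ
      simpa using this
    have h2 : f.dualMap ψ = (s : A) • φ := hs
    rw [h2, map_smul, smul_eq_mul] at h1
    have := s.2
    simp only [LinearMap.zero_apply]
    exact (mem_nonZeroDivisors_iff_right.mp this) (η φ) (by rw [mul_comm]; exact h1)
  constructor
  constructor
  · -- injectivity of eval
    intro a b hab
    apply hf
    apply hrefl'.bijective_dual_eval'.injective
    rw [← nat a, ← nat b, hab]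
  · -- surjectivity of eval
    intro ξ
    obtain ⟨m', hm'⟩ := hrefl'.bijective_dual_eval'.surjective (f.dualMap.dualMap ξ)
    have hgm' : g m' = 0 := by
      apply hrefl''.bijective_dual_eval'.injective
      rw [← nat', hm', map_zero]
      ext φ''
      have h0 : f.dualMap (g.dualMap φ'') = 0 := by
        show (φ'' ∘ₗ g) ∘ₗ f = 0
        rw [LinearMap.comp_assoc, hgf, LinearMap.comp_zero]
      have : (φ'' ∘ₗ g) ∘ₗ f = f.dualMap (g.dualMap φ'') := rfl
      simp [this, h0]
    obtain ⟨m, hm⟩ : m' ∈ LinearMap.range f := by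
      rw [hfg]; exact hgm'
    exact ⟨m, hinj2 (by rw [nat m, hm, hm'])⟩
end
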